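/- arXiv:1306.1556 — 9 statements merged into one kernel-verified Lean document; each statement's English description precedes it below -/
import Mathlib

section
/- For every positive integer n, every real p with 0 ≤ p ≤ 1, every real α > 2 with δ := 2/α, and every real θ' > 0, the improper Riemann integral 2π ∫_0^∞ [1 − (p·v^α/(v^α + θ') + 1 − p)^n] · v dv converges and equals π · θ'^δ · Γ(1+δ) · Γ(1−δ) · D_n(p,δ), where Γ is the Gamma function. -/
open MeasureTheory Real Set

lemma realBeta (s t : ℝ) (hs : 0 < s) (ht : 0 < t) :
    IntegrableOn (fun x : ℝ => x ^ (s-1) * (1-x) ^ (t-1)) (Ioo (0:ℝ) 1) volume ∧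
    ∫ x in Ioo (0:ℝ) 1, x ^ (s-1) * (1-x) ^ (t-1) =
      Gamma s * Gamma t / Gamma (s+t) := by
  have key : ∀ x ∈ Ioc (0:ℝ) 1,
      ((x:ℂ) ^ ((s:ℂ) - 1) * (1 - (x:ℂ)) ^ ((t:ℂ) - 1)) =
        ((x ^ (s-1) * (1-x) ^ (t-1) : ℝ) : ℂ) := by
    intro x hx
    rw [Complex.ofReal_mul, Complex.ofReal_cpow hx.1.le, Complex.ofReal_cpow (by linarith [hx.2])]
    push_cast
    ring
  have hc := Complex.betaIntegral_convergent (u := (s:ℂ)) (v := (t:ℂ)) (by simpa) (by simpa)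
  have hIc : IntegrableOn (fun x : ℝ => (x:ℂ) ^ ((s:ℂ) - 1) * (1 - (x:ℂ)) ^ ((t:ℂ) - 1))
      (Ioc (0:ℝ) 1) volume := (intervalIntegrable_iff_integrableOn_Ioc_of_le zero_le_one).mp hc
  have hIr : IntegrableOn (fun x : ℝ => x ^ (s-1) * (1-x) ^ (t-1)) (Ioc (0:ℝ) 1) volume := by
    have := hIc.re
    refine (IntegrableOn.congr_fun this ?_ measurableSet_Ioc)
    intro x hx
    simp [key x hx]
  constructor
  · exact hIr.mono_set Ioo_subset_Ioc_self
  · have h1 : Complex.betaIntegral s t =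
        ((∫ x in Ioo (0:ℝ) 1, x ^ (s-1) * (1-x) ^ (t-1) : ℝ) : ℂ) := by
      rw [Complex.betaIntegral, intervalIntegral.integral_of_le zero_le_one,
        setIntegral_congr_fun measurableSet_Ioc key]
      rw [integral_Ioc_eq_integral_Ioo]
      exact integral_ofReal
    have h2 := Complex.Gamma_mul_Gamma_eq_betaIntegral (s := (s:ℂ)) (t := (t:ℂ))
      (by simpa) (by simpa)
    rw [h1] at h2
    have hGst : Gamma (s + t) ≠ 0 := (Gamma_pos_of_pos (by linarith)).ne'
    have h3 : ((Gamma s * Gamma t : ℝ) : ℂ) =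
        ((Gamma (s+t) * ∫ x in Ioo (0:ℝ) 1, x ^ (s-1) * (1-x) ^ (t-1) : ℝ) : ℂ) := by
      push_cast
      rw [← Complex.Gamma_ofReal, ← Complex.Gamma_ofReal, ← Complex.Gamma_ofReal]
      push_cast at h2 ⊢
      exact h2
    have h4 := Complex.ofReal_inj.mp h3
    field_simp
    linarith [h4]

lemma betaIoi (δ b : ℝ) (h0 : 0 < δ) (hb : δ < b) :
    IntegrableOn (fun u : ℝ => u ^ (δ-1) * (1+u) ^ (-b)) (Ioi (0:ℝ)) volume ∧
    ∫ u in Ioi (0:ℝ), u ^ (δ-1) * (1+u) ^ (-b) = Gamma δ * Gamma (b-δ) / Gamma b := by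
  set f : ℝ → ℝ := fun x => x / (1-x) with hf
  set g : ℝ → ℝ := fun u => u ^ (δ-1) * (1+u) ^ (-b) with hg
  have himg : f '' Ioo 0 1 = Ioi (0:ℝ) := by
    ext u
    simp only [mem_image, mem_Ioo, mem_Ioi]
    constructor
    · rintro ⟨x, ⟨hx0, hx1⟩, rfl⟩
      exact div_pos hx0 (by linarith)
    · intro hu
      refine ⟨u / (1+u), ⟨div_pos hu (by linarith), by rw [div_lt_one (by linarith)]; linarith⟩, ?_⟩
      have h1u : (1:ℝ) + u ≠ 0 := by positivity
      simp only [hf]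
      rw [div_eq_iff]
      · field_simp; ring
      · intro h
        have : (1:ℝ) - u / (1+u) = 1/(1+u) := by field_simp; ring
        rw [this] at h
        simp at h
        linarith
  have hderiv : ∀ x ∈ Ioo (0:ℝ) 1, HasDerivWithinAt f (((1-x)^2)⁻¹) (Ioo 0 1) x := by
    intro x hx
    have hx1 : (1:ℝ) - x ≠ 0 := by have := hx.2; intro h; simp only [mem_Ioo] at hx; linarith
    have h := (hasDerivAt_id x).div ((hasDerivAt_id x).const_sub 1) hx1
    convert h.hasDerivWithinAt using 1
    · rfl
    · rfl
    · rfl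
    have hx1' : (0:ℝ) < 1 - x := by simp only [mem_Ioo] at hx; linarith [hx.2]
    rw [eq_div_iff (by positivity)]
    field_simp
    simp only [id_eq]; ring
  have hinj : InjOn f (Ioo 0 1) := by
    intro x hx y hy hxy
    simp only [hf] at hxy
    have hx1 : (0:ℝ) < 1 - x := by simp only [mem_Ioo] at hx; linarith [hx.2]
    have hy1 : (0:ℝ) < 1 - y := by simp only [mem_Ioo] at hy; linarith [hy.2]
    rw [div_eq_div_iff hx1.ne' hy1.ne'] at hxy
    nlinarith [hxy]
  have key : EqOn (fun x => |((1-x)^2)⁻¹| • g (f x))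
      (fun x : ℝ => x ^ (δ-1) * (1-x) ^ ((b-δ)-1)) (Ioo 0 1) := by
    intro x hx
    simp only [mem_Ioo] at hx
    have hx0 : (0:ℝ) < x := hx.1
    have hx1 : (0:ℝ) < 1 - x := by linarith [hx.2]
    have h1 : (1:ℝ) + x/(1-x) = (1-x)⁻¹ := by field_simp; ring
    have h2 : (x/(1-x)) ^ (δ-1) = x ^ (δ-1) * ((1-x) ^ (δ-1))⁻¹ := by
      rw [Real.div_rpow hx0.le hx1.le, div_eq_mul_inv]
    have h3 : ((1-x)⁻¹) ^ (-b) = (1-x) ^ b := by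
      rw [← Real.rpow_neg_one (1-x), ← Real.rpow_mul hx1.le]
      norm_num
    simp only [hg, hf, smul_eq_mul, h1, h2, h3]
    rw [abs_of_pos (by positivity)]
    have h4 : ((1-x)^2)⁻¹ = (1-x) ^ (-2:ℝ) := by
      rw [Real.rpow_neg hx1.le, Real.rpow_two]
    have h5 : ((1-x) ^ (δ-1))⁻¹ = (1-x) ^ (-(δ-1)) := (Real.rpow_neg hx1.le _).symm
    rw [h4, h5]
    rw [show x ^ (δ-1) * (1-x) ^ (-(δ-1)) * (1-x) ^ b = x ^ (δ-1) * ((1-x) ^ (-(δ-1)) * (1-x) ^ b) by ring,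
      ← Real.rpow_add hx1, show (1-x)^(-2:ℝ) * (x ^ (δ-1) * (1-x) ^ (-(δ-1)+b)) = x ^ (δ-1) * ((1-x)^(-2:ℝ) * (1-x) ^ (-(δ-1)+b)) by ring,
      ← Real.rpow_add hx1]
    ring_nf
  obtain ⟨hi, hv⟩ := realBeta δ (b-δ) h0 (by linarith)
  constructor
  · rw [← himg, integrableOn_image_iff_integrableOn_abs_deriv_smul measurableSet_Ioo hderiv hinj]
    exact (hi.congr_fun key.symm measurableSet_Ioo)
  · rw [← himg, integral_image_eq_integral_abs_deriv_smul measurableSet_Ioo hderiv hinj,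
      setIntegral_congr_fun measurableSet_Ioo key, hv]
    congr 2
    ring

lemma hk_cont (α θ' : ℝ) (hα : 0 < α) (hθ : 0 < θ') (k : ℕ) :
    ContinuousOn (fun v : ℝ => v * ((v ^ α + θ') ^ k)⁻¹) (Ici (0:ℝ)) := by
  have hpos : ∀ v ∈ Ici (0:ℝ), (0:ℝ) < v ^ α + θ' := by
    intro v hv
    have := Real.rpow_nonneg (mem_Ici.mp hv) α
    linarith
  refine continuousOn_id.mul (ContinuousOn.inv₀ (ContinuousOn.pow ?_ k)
    fun v hv => pow_ne_zero _ (hpos v hv).ne')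
  exact ContinuousOn.add (fun x _ => (Real.continuousAt_rpow_const x α
    (Or.inr hα.le)).continuousWithinAt) continuousOn_const

lemma hk_int (α θ' : ℝ) (hα : 2 < α) (hθ : 0 < θ') (k : ℕ) (hk : 1 ≤ k) :
    IntegrableOn (fun v : ℝ => v * ((v ^ α + θ') ^ k)⁻¹) (Ioi (0:ℝ)) volume := by
  have hcont := hk_cont α θ' (by linarith) hθ k
  rw [← Ioc_union_Ioi_eq_Ioi (zero_le_one (α := ℝ))]
  apply IntegrableOn.union
  · exact ((hcont.mono Icc_subset_Ici_self).integrableOn_Icc).mono_set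
      Ioc_subset_Icc_self
  · have hmeas : AEStronglyMeasurable (fun v : ℝ => v * ((v ^ α + θ') ^ k)⁻¹)
        (volume.restrict (Ioi 1)) :=
      (hcont.mono fun x hx => le_of_lt (lt_of_lt_of_le one_pos (le_of_lt (mem_Ioi.mp hx)))).aestronglyMeasurable measurableSet_Ioi
    refine Integrable.mono' (integrableOn_Ioi_rpow_of_lt (a := 1-α) (by linarith) one_pos) hmeas ?_
    refine (ae_restrict_iff' measurableSet_Ioi).mpr (ae_of_all _ fun v hv => ?_)
    have hv1 : (1:ℝ) < v := mem_Ioi.mp hv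
    have hv0 : (0:ℝ) < v := lt_trans one_pos hv1
    have hva : (1:ℝ) ≤ v ^ α := Real.one_le_rpow hv1.le (by linarith)
    have h1 : v ^ α ≤ (v ^ α + θ') ^ k := by
      calc v ^ α ≤ v ^ α + θ' := by linarith
        _ ≤ (v ^ α + θ') ^ k := le_self_pow₀ (by linarith) (by omega)
    have hpos : (0:ℝ) < (v ^ α + θ') ^ k := by positivity
    rw [Real.norm_eq_abs, abs_of_nonneg (by positivity)]
    calc v * ((v ^ α + θ') ^ k)⁻¹ ≤ v * (v ^ α)⁻¹ := by
          apply mul_le_mul_of_nonneg_left _ hv0.le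
          exact inv_anti₀ (by positivity) h1
      _ = v ^ (1 - α) := by
          rw [← Real.rpow_neg_one (v ^ α), ← Real.rpow_mul hv0.le,
            show (1:ℝ) - α = 1 + α * -1 by ring, Real.rpow_add hv0, Real.rpow_one]

lemma Jval (α θ' : ℝ) (hα : 2 < α) (hθ : 0 < θ') (k : ℕ) (hk : 1 ≤ k) :
    ∫ v in Ioi (0:ℝ), v * ((v ^ α + θ') ^ k)⁻¹ =
      θ' ^ (2/α - k) * (Gamma (2/α) * Gamma ((k:ℝ) - 2/α) / Gamma (k:ℝ)) / α := by
  have hα0 : (0:ℝ) < α := by linarith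
  set δ : ℝ := 2/α with hδ
  have hδ0 : 0 < δ := by positivity
  have hδ1 : δ < 1 := by rw [hδ, div_lt_one hα0]; linarith
  set g : ℝ → ℝ := fun u => (u ^ (δ-1) * ((u + θ') ^ k)⁻¹) / α with hg
  have step1 : ∫ v in Ioi (0:ℝ), v * ((v ^ α + θ') ^ k)⁻¹
      = ∫ u in Ioi (0:ℝ), g u := by
    rw [← integral_comp_rpow_Ioi_of_pos (g := g) hα0]
    refine setIntegral_congr_fun measurableSet_Ioi fun v hv => ?_
    have hv0 : (0:ℝ) < v := mem_Ioi.mp hv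
    have hpow : (v ^ α) ^ (δ-1) = v ^ (2-α) := by
      rw [← Real.rpow_mul hv0.le]
      congr 1
      rw [hδ]; field_simp
    have hsplit : v ^ (α-1) * v ^ (2-α) = v := by
      rw [← Real.rpow_add hv0]; norm_num
    simp only [hg, smul_eq_mul, hpow]
    have : α * v ^ (α-1) * (v ^ (2-α) * ((v ^ α + θ') ^ k)⁻¹ / α)
        = (v ^ (α-1) * v ^ (2-α)) * ((v ^ α + θ') ^ k)⁻¹ := by
      field_simp
    rw [this, hsplit]
  rw [step1]
  have hk' : δ < (k:ℝ) := lt_of_lt_of_le hδ1 (by exact_mod_cast hk)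
  obtain ⟨hbi, hbv⟩ := betaIoi δ (k:ℝ) hδ0 hk'
  have hF : ∀ x ∈ Ioi (0:ℝ), (fun u => u ^ (δ-1) * ((u + θ') ^ k)⁻¹) (θ' * x)
      = θ' ^ (δ-1) * ((θ' ^ k : ℝ))⁻¹ * (x ^ (δ-1) * (1+x) ^ (-(k:ℝ))) := by
    intro x hx
    have hx0 : (0:ℝ) < x := hx
    simp only
    rw [Real.mul_rpow hθ.le hx0.le, show θ' * x + θ' = θ' * (x+1) by ring, mul_pow,
      mul_inv, Real.rpow_neg (by positivity), Real.rpow_natCast, add_comm x 1]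
    ring
  simp only [hg]
  rw [integral_div]
  congr 1
  have h1 := integral_comp_mul_left_Ioi (fun u => u ^ (δ-1) * ((u + θ') ^ k)⁻¹) 0 hθ
  rw [mul_zero] at h1
  have h2 : ∫ x in Ioi (0:ℝ), (fun u => u ^ (δ-1) * ((u + θ') ^ k)⁻¹) (θ' * x)
      = θ' ^ (δ-1) * ((θ' ^ k : ℝ))⁻¹ * (Gamma δ * Gamma ((k:ℝ) - δ) / Gamma (k:ℝ)) := by
    rw [setIntegral_congr_fun measurableSet_Ioi hF, MeasureTheory.integral_const_mul, hbv]
  rw [h2, smul_eq_mul] at h1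
  have h3 : ∫ u in Ioi (0:ℝ), u ^ (δ-1) * ((u + θ') ^ k)⁻¹
      = (θ' * θ' ^ (δ-1) * ((θ' ^ k : ℝ))⁻¹) * (Gamma δ * Gamma ((k:ℝ) - δ) / Gamma (k:ℝ)) := by
    have := congrArg (fun z => θ' * z) h1.symm
    rw [← mul_assoc, mul_inv_cancel₀ hθ.ne', one_mul] at this
    rw [this]; ring
  rw [h3]
  congr 1
  have e1 : θ' * θ' ^ (δ-1) = θ' ^ δ := by
    calc θ' * θ' ^ (δ-1) = θ' ^ (1:ℝ) * θ' ^ (δ-1) := by rw [Real.rpow_one]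
      _ = θ' ^ (1+(δ-1)) := (Real.rpow_add hθ _ _).symm
      _ = θ' ^ δ := by norm_num
  have e2 : ((θ' ^ k : ℝ))⁻¹ = θ' ^ (-(k:ℝ)) := by
    rw [← Real.rpow_natCast θ' k, ← Real.rpow_neg hθ.le]
  rw [e1, e2, ← Real.rpow_add hθ, sub_eq_add_neg]

lemma gamma_prod (δ : ℝ) (hδ : δ < 1) (m : ℕ) :
    Gamma ((m:ℝ) + 1 - δ) =
      (-1:ℝ)^m * (∏ j ∈ Finset.Icc 1 m, (δ - (j:ℝ))) * Gamma (1-δ) := by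
  induction m with
  | zero => simp
  | succ m ih =>
    have hm : (0:ℝ) ≤ (m:ℝ) := Nat.cast_nonneg m
    have hne : (m:ℝ) + 1 - δ ≠ 0 := by intro h; nlinarith
    have hcast : ((m+1:ℕ):ℝ) + 1 - δ = ((m:ℝ) + 1 - δ) + 1 := by push_cast; ring
    rw [hcast, Gamma_add_one hne, ih, Finset.prod_Icc_succ_top (by omega)]
    push_cast
    ring

lemma expand_pt (n : ℕ) (p A θ' : ℝ) (hθ : 0 < θ') (hA : 0 ≤ A) (v : ℝ) :
    (1 - (p * A / (A + θ') + 1 - p) ^ n) * v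
      = ∑ k ∈ Finset.Icc 1 n,
          ((n.choose k : ℝ) * (-1:ℝ)^(k+1) * p^k * θ'^k) * (v * ((A + θ')^k)⁻¹) := by
  have hw : (0:ℝ) < A + θ' := by linarith
  have h1 : p * A / (A+θ') + 1 - p = 1 - p * θ' / (A+θ') := by field_simp; ring
  rw [h1]
  have hbin : (1 - p*θ'/(A+θ'))^n
      = ∑ k ∈ Finset.range (n+1), (-(p*θ'/(A+θ')))^k * (n.choose k : ℝ) := by
    rw [sub_eq_add_neg, add_comm]
    simpa using add_pow (-(p*θ'/(A+θ'))) 1 n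
  have hins : Finset.range (n+1) = insert 0 (Finset.Icc 1 n) := by
    ext a; simp [Finset.mem_Icc, Nat.lt_succ_iff]; omega
  rw [hbin, hins, Finset.sum_insert (by simp)]
  simp only [pow_zero, one_mul, Nat.choose_zero_right, Nat.cast_one]
  rw [show (1 - (1 + ∑ k ∈ Finset.Icc 1 n, (-(p*θ'/(A+θ')))^k * (n.choose k : ℝ))) * v
      = ∑ k ∈ Finset.Icc 1 n, -((-(p*θ'/(A+θ')))^k * (n.choose k : ℝ) * v) by
    rw [Finset.sum_neg_distrib, ← Finset.sum_mul]; ring]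
  refine Finset.sum_congr rfl fun k hk => ?_
  rw [neg_pow, div_pow, mul_pow, pow_succ]
  field_simp

/-- Diversity polynomial `D_n(p,δ) = ∑_{k=1}^n C(n,k) ((∏_{j=1}^{k-1} (δ-j))/(k-1)!) p^k`. -/
noncomputable def divPoly (n : ℕ) (p δ : ℝ) : ℝ :=
  ∑ k ∈ Finset.Icc 1 n, (n.choose k : ℝ) *
    ((∏ j ∈ Finset.Icc 1 (k - 1), (δ - (j : ℝ))) / (Nat.factorial (k - 1) : ℝ)) * p ^ k

theorem stmt0 (n : ℕ) (hn : 1 ≤ n) (p : ℝ) (hp0 : 0 ≤ p) (hp1 : p ≤ 1)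
    (α : ℝ) (hα : 2 < α) (θ' : ℝ) (hθ : 0 < θ') :
    IntegrableOn
      (fun v : ℝ => (1 - (p * v ^ α / (v ^ α + θ') + 1 - p) ^ n) * v) (Ioi 0) volume ∧
    2 * π * ∫ v in Ioi (0 : ℝ), (1 - (p * v ^ α / (v ^ α + θ') + 1 - p) ^ n) * v =
      π * θ' ^ (2 / α) * Real.Gamma (1 + 2 / α) * Real.Gamma (1 - 2 / α) *
        divPoly n p (2 / α) := by
  have hα0 : (0:ℝ) < α := by linarith
  set δ : ℝ := 2/α with hδ
  have hδ0 : 0 < δ := by positivity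
  have hδ1 : δ < 1 := by rw [hδ, div_lt_one hα0]; linarith
  set c : ℕ → ℝ := fun k => (n.choose k : ℝ) * (-1:ℝ)^(k+1) * p^k * θ'^k with hc
  have hEq : EqOn (fun v : ℝ => (1 - (p * v ^ α / (v ^ α + θ') + 1 - p) ^ n) * v)
      (fun v : ℝ => ∑ k ∈ Finset.Icc 1 n, c k * (v * ((v ^ α + θ')^k)⁻¹)) (Ioi 0) := by
    intro v hv
    exact expand_pt n p (v ^ α) θ' hθ (Real.rpow_nonneg (le_of_lt hv) α) v
  have hIk : ∀ k ∈ Finset.Icc 1 n,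
      IntegrableOn (fun v : ℝ => c k * (v * ((v ^ α + θ')^k)⁻¹)) (Ioi 0) volume := by
    intro k hk
    exact (hk_int α θ' hα hθ k (Finset.mem_Icc.mp hk).1).const_mul _
  have hsum : IntegrableOn
      (fun v : ℝ => ∑ k ∈ Finset.Icc 1 n, c k * (v * ((v ^ α + θ')^k)⁻¹)) (Ioi 0) volume :=
    integrable_finset_sum _ (fun k hk => hIk k hk)
  refine ⟨hsum.congr_fun hEq.symm measurableSet_Ioi, ?_⟩
  rw [setIntegral_congr_fun measurableSet_Ioi hEq, integral_finset_sum _ (fun k hk => hIk k hk)]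
  have hJ : ∀ k ∈ Finset.Icc 1 n, ∫ v in Ioi (0:ℝ), c k * (v * ((v ^ α + θ')^k)⁻¹)
      = c k * (θ' ^ (δ - k) * (Gamma δ * Gamma ((k:ℝ) - δ) / Gamma (k:ℝ)) / α) := by
    intro k hk
    rw [MeasureTheory.integral_const_mul, Jval α θ' hα hθ k (Finset.mem_Icc.mp hk).1]
  rw [Finset.sum_congr rfl hJ, divPoly, Finset.mul_sum, Finset.mul_sum]
  refine Finset.sum_congr rfl fun k hk => ?_
  obtain ⟨hk1, hk2⟩ := Finset.mem_Icc.mp hk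
  obtain ⟨m, rfl⟩ : ∃ m, k = m + 1 := ⟨k - 1, by omega⟩
  have hGk : Gamma (((m+1:ℕ)):ℝ) = (m.factorial : ℝ) := by
    push_cast
    exact Real.Gamma_nat_eq_factorial m
  have hGkδ : Gamma ((((m+1:ℕ)):ℝ) - δ)
      = (-1:ℝ)^m * (∏ j ∈ Finset.Icc 1 m, (δ - (j:ℝ))) * Gamma (1-δ) := by
    have h := gamma_prod δ hδ1 m
    have : (((m+1:ℕ)):ℝ) - δ = (m:ℝ) + 1 - δ := by push_cast; ring
    rw [this, h]
  have hsplit : θ' ^ (δ - ((m+1:ℕ):ℝ)) = θ' ^ δ * ((θ' ^ (m+1) : ℝ))⁻¹ := by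
    rw [← Real.rpow_natCast θ' (m+1), ← Real.rpow_neg hθ.le, ← Real.rpow_add hθ, sub_eq_add_neg]
  have hG1δ : Gamma (1+δ) = δ * Gamma δ := by
    rw [add_comm]; exact Gamma_add_one hδ0.ne'
  have hs : (-1:ℝ)^(m+1+1) * (-1)^m = 1 := by
    rw [← pow_add, show m+1+1+m = 2*(m+1) by omega, pow_mul]
    norm_num
  have hδα : δ * α = 2 := by rw [hδ]; field_simp
  have hF : ((m.factorial:ℕ):ℝ) ≠ 0 := by positivity
  have hθk : (θ':ℝ)^(m+1) ≠ 0 := by positivity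
  rw [hGkδ, hGk, hsplit, hG1δ, hc]
  simp only [Nat.add_sub_cancel]
  set K : ℝ := π * ((n.choose (m+1)):ℝ) * p^(m+1) * θ'^δ * Gamma δ *
    (∏ j ∈ Finset.Icc 1 m, (δ - (j:ℝ))) * Gamma (1-δ) / (m.factorial:ℝ) with hK
  have hαα : α * α⁻¹ = 1 := mul_inv_cancel₀ hα0.ne'
  have hX : θ'^(m+1) * (θ'^(m+1))⁻¹ = 1 := mul_inv_cancel₀ hθk
  have hss : ((-1:ℝ)^m) * ((-1)^m) = 1 := by rw [← pow_add, ← two_mul, pow_mul]; norm_num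
  linear_combination (2*K/α)*hs + (-(K/α))*hδα + (2*K/α*((-1:ℝ)^m*(-1)^m))*hX + (2*K/α)*hαα
end

section
/- For every integer n ≥ 1, every real p, and every real δ with 0 < δ < 1, the alternating sum ∑_{k=1}^n (−1)^{k+1} · (n choose k) · D_k(p,δ) equals p^n · Γ(n−δ) / (Γ(n) · Γ(1−δ)), where Γ is the Gamma function. -/
open Real

lemma aux_alt (n m : ℕ) (hm : m ≤ n) :
    ∑ k ∈ Finset.Icc m n, (-1 : ℝ) ^ (k + 1) * (n.choose k : ℝ) * (k.choose m : ℝ) =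
      if m = n then (-1 : ℝ) ^ (n + 1) else 0 := by
  have hIcc : Finset.Icc m n = Finset.Ico m (n + 1) := rfl
  rw [hIcc, Finset.sum_Ico_eq_sum_range]
  have hrw : ∀ i ∈ Finset.range (n + 1 - m),
      (-1 : ℝ) ^ (m + i + 1) * (n.choose (m + i) : ℝ) * ((m + i).choose m : ℝ) =
      ((-1 : ℝ) ^ (m + 1) * (n.choose m : ℝ)) * ((-1 : ℝ) ^ i * ((n - m).choose i : ℝ)) := by
    intro i hi
    have hile : m + i ≤ n := by
      have := Finset.mem_range.mp hi
      omega
    have h := Nat.choose_mul (n := n) (Nat.le_add_right m i)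
    have h2 : (m + i) - m = i := by omega
    rw [h2] at h
    have : (n.choose (m + i) : ℝ) * ((m + i).choose m : ℝ) =
        (n.choose m : ℝ) * ((n - m).choose i : ℝ) := by
      exact_mod_cast congrArg (Nat.cast : ℕ → ℝ) h
    calc (-1 : ℝ) ^ (m + i + 1) * (n.choose (m + i) : ℝ) * ((m + i).choose m : ℝ)
        = (-1 : ℝ) ^ (m + i + 1) * ((n.choose (m + i) : ℝ) * ((m + i).choose m : ℝ)) := by ring
      _ = (-1 : ℝ) ^ (m + i + 1) * ((n.choose m : ℝ) * ((n - m).choose i : ℝ)) := by rw [this]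
      _ = ((-1 : ℝ) ^ (m + 1) * (n.choose m : ℝ)) * ((-1 : ℝ) ^ i * ((n - m).choose i : ℝ)) := by
          rw [show m + i + 1 = (m + 1) + i by ring, pow_add]; ring
  rw [Finset.sum_congr rfl hrw, ← Finset.mul_sum]
  have key : ∑ i ∈ Finset.range (n + 1 - m), (-1 : ℝ) ^ i * ((n - m).choose i : ℝ) =
      if n - m = 0 then 1 else 0 := by
    have h := Int.alternating_sum_range_choose (n := n - m)
    have h2 : ((∑ i ∈ Finset.range (n - m + 1), (-1 : ℤ) ^ i * ((n - m).choose i : ℤ) : ℤ) : ℝ) =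
        ∑ i ∈ Finset.range (n - m + 1), (-1 : ℝ) ^ i * ((n - m).choose i : ℝ) := by
      push_cast; ring
    have h3 : n + 1 - m = n - m + 1 := by omega
    rw [h3, ← h2, h]
    split <;> norm_num
  rw [key]
  by_cases hmn : m = n
  · subst hmn
    simp
  · have : n - m ≠ 0 := by omega
    rw [if_neg this, if_neg hmn, mul_zero]

lemma gamma_prod_s2 (δ : ℝ) (hδ0 : 0 < δ) (hδ1 : δ < 1) :
    ∀ n : ℕ, 1 ≤ n →
      Real.Gamma ((n : ℝ) - δ) = (∏ j ∈ Finset.Icc 1 (n - 1), ((j : ℝ) - δ)) * Real.Gamma (1 - δ) := by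
  intro n hn
  induction n with
  | zero => omega
  | succ m ih =>
    rcases Nat.eq_or_lt_of_le hn with h1 | h1
    · have : m = 0 := by omega
      subst this
      simp
    · have hm : 1 ≤ m := by omega
      have hrec : Real.Gamma (((m + 1 : ℕ) : ℝ) - δ) = ((m : ℝ) - δ) * Real.Gamma ((m : ℝ) - δ) := by
        have hne : (m : ℝ) - δ ≠ 0 := by
          have : (1 : ℝ) ≤ (m : ℝ) := by exact_mod_cast hm
          linarith
        have := Real.Gamma_add_one hne
        rw [← this]
        congr 1
        push_cast
        ring
      rw [hrec, ih hm]
      have hprod : ∏ j ∈ Finset.Icc 1 ((m + 1) - 1), ((j : ℝ) - δ) =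
          (∏ j ∈ Finset.Icc 1 (m - 1), ((j : ℝ) - δ)) * ((m : ℝ) - δ) := by
        have h4 : (m + 1) - 1 = m := rfl
        rw [h4]
        have : Finset.Icc 1 m = Finset.Icc 1 (m - 1 + 1) := by congr 1; omega
        rw [this, Finset.prod_Icc_succ_top (by omega), show m - 1 + 1 = m from by omega]
      rw [hprod]
      ring

theorem stmt2 (n : ℕ) (hn : 1 ≤ n) (p : ℝ) (δ : ℝ) (hδ0 : 0 < δ) (hδ1 : δ < 1) :
    ∑ k ∈ Finset.Icc 1 n, (-1 : ℝ) ^ (k + 1) * (n.choose k : ℝ) * divPoly k p δ =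
      p ^ n * Real.Gamma ((n : ℝ) - δ) / (Real.Gamma n * Real.Gamma (1 - δ)) := by
  set B : ℕ → ℝ := fun m =>
    ((∏ j ∈ Finset.Icc 1 (m - 1), (δ - (j : ℝ))) / (Nat.factorial (m - 1) : ℝ)) * p ^ m with hB
  -- Step 1: LHS = (-1)^(n+1) * B n
  have step1 : ∑ k ∈ Finset.Icc 1 n, (-1 : ℝ) ^ (k + 1) * (n.choose k : ℝ) * divPoly k p δ =
      (-1 : ℝ) ^ (n + 1) * B n := by
    have expand : ∀ k ∈ Finset.Icc 1 n,
        (-1 : ℝ) ^ (k + 1) * (n.choose k : ℝ) * divPoly k p δ =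
        ∑ m ∈ Finset.Icc 1 n, (-1 : ℝ) ^ (k + 1) * (n.choose k : ℝ) * (k.choose m : ℝ) * B m := by
      intro k hk
      rw [divPoly, Finset.mul_sum]
      rw [Finset.sum_subset (Finset.Icc_subset_Icc_right (Finset.mem_Icc.mp hk).2)]
      · apply Finset.sum_congr rfl
        intro m _
        simp only [hB]
        ring
      · intro m hm hm'
        have : k < m := by
          simp only [Finset.mem_Icc] at hm hm'
          omega
        rw [Nat.choose_eq_zero_of_lt this]
        simp
    rw [Finset.sum_congr rfl expand, Finset.sum_comm]
    have inner : ∀ m ∈ Finset.Icc 1 n,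
        (∑ k ∈ Finset.Icc 1 n, (-1 : ℝ) ^ (k + 1) * (n.choose k : ℝ) * (k.choose m : ℝ) * B m) =
        (if m = n then (-1 : ℝ) ^ (n + 1) else 0) * B m := by
      intro m hm
      rw [Finset.mem_Icc] at hm
      have hsub : Finset.Icc m n ⊆ Finset.Icc 1 n := Finset.Icc_subset_Icc_left hm.1
      rw [← Finset.sum_subset hsub]
      · rw [show (∑ k ∈ Finset.Icc m n,
            (-1 : ℝ) ^ (k + 1) * (n.choose k : ℝ) * (k.choose m : ℝ) * B m) =
            (∑ k ∈ Finset.Icc m n,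
            (-1 : ℝ) ^ (k + 1) * (n.choose k : ℝ) * (k.choose m : ℝ)) * B m by
          rw [Finset.sum_mul]]
        rw [aux_alt n m hm.2]
      · intro k hk hk'
        have : k < m := by
          simp only [Finset.mem_Icc] at hk hk'
          omega
        rw [Nat.choose_eq_zero_of_lt this]
        simp
    rw [Finset.sum_congr rfl inner]
    rw [Finset.sum_eq_single n]
    · simp
    · intro b _ hb
      rw [if_neg hb, zero_mul]
    · intro h
      exact absurd (Finset.mem_Icc.mpr ⟨hn, le_refl n⟩) h
  rw [step1]
  -- Step 2: compute the RHS
  have hΓn : Real.Gamma (n : ℝ) = (Nat.factorial (n - 1) : ℝ) := by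
    have := Real.Gamma_nat_eq_factorial (n - 1)
    rw [← this]
    congr 1
    have : ((n - 1 : ℕ) : ℝ) = (n : ℝ) - 1 := by
      have : (1 : ℝ) ≤ (n : ℝ) := by exact_mod_cast hn
      push_cast [Nat.cast_sub hn]
      ring
    rw [this]; ring
  have hΓ := gamma_prod_s2 δ hδ0 hδ1 n hn
  have hΓ1 : Real.Gamma (1 - δ) ≠ 0 := (Real.Gamma_pos_of_pos (by linarith)).ne'
  have hfac : (Nat.factorial (n - 1) : ℝ) ≠ 0 := by
    exact_mod_cast (Nat.factorial_pos (n - 1)).ne'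
  have hflip : (∏ j ∈ Finset.Icc 1 (n - 1), ((j : ℝ) - δ)) =
      (-1 : ℝ) ^ (n + 1) * ∏ j ∈ Finset.Icc 1 (n - 1), (δ - (j : ℝ)) := by
    have : (∏ j ∈ Finset.Icc 1 (n - 1), ((j : ℝ) - δ)) =
        ∏ j ∈ Finset.Icc 1 (n - 1), (-1 : ℝ) * (δ - (j : ℝ)) := by
      apply Finset.prod_congr rfl
      intro j _; ring
    rw [this, Finset.prod_mul_distrib, Finset.prod_const]
    have hcard : (Finset.Icc 1 (n - 1)).card = n - 1 := by
      rw [Nat.card_Icc]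
      omega
    rw [hcard]
    have : (-1 : ℝ) ^ (n - 1) = (-1 : ℝ) ^ (n + 1) := by
      have : n + 1 = (n - 1) + 2 := by omega
      rw [this, pow_add]
      norm_num
    rw [this]
  rw [hΓ, hΓn, hflip, hB]
  field_simp
end

section
/- Fix an integer n ≥ 1, a real p with 0 ≤ p ≤ 1, and a real δ with 0 < δ < 1. Define ψ_n(Δ) = ∑_{k=1}^n (−1)^{k+1} · (n choose k) · exp(−Δ · D_k(p,δ)) for real Δ. Then the function Δ ↦ ψ_n(Δ) − 1 + Δ · p^n · Γ(n−δ)/(Γ(n)Γ(1−δ)) is O(Δ²) as Δ → 0. -/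
open Real Asymptotics Filter

lemma psiExpBigO (x : ℝ) :
    (fun Δ : ℝ => Real.exp (Δ * x) - 1 - Δ * x) =O[nhds 0] (fun Δ : ℝ => Δ ^ 2) := by
  apply IsBigO.of_bound (x ^ 2)
  have h : ∀ᶠ Δ : ℝ in nhds 0, |Δ| ≤ 1 / (|x| + 1) := by
    have hpos : 0 < 1 / (|x| + 1) := by positivity
    filter_upwards [Metric.ball_mem_nhds (0:ℝ) hpos] with Δ hΔ
    rw [Metric.mem_ball, Real.dist_eq, sub_zero] at hΔ; exact hΔ.le
  filter_upwards [h] with Δ hΔ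
  have hx1 : |Δ * x| ≤ 1 := by
    rw [abs_mul]
    calc |Δ| * |x| ≤ (1 / (|x| + 1)) * |x| := by
          apply mul_le_mul_of_nonneg_right hΔ (abs_nonneg x)
      _ ≤ 1 := by
          rw [div_mul_eq_mul_div, mul_comm]
          apply div_le_one_of_le₀ <;> nlinarith [abs_nonneg x]
  have hb := Real.abs_exp_sub_one_sub_id_le hx1
  calc ‖Real.exp (Δ * x) - 1 - Δ * x‖ ≤ (Δ * x) ^ 2 := hb
    _ = x ^ 2 * Δ ^ 2 := by ring
    _ ≤ x ^ 2 * ‖Δ ^ 2‖ := by rw [Real.norm_eq_abs, abs_of_nonneg (sq_nonneg Δ)]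

lemma psiAltSum (N : ℕ) : ∑ i ∈ Finset.range (N + 1), (-1 : ℝ) ^ i * N.choose i
    = if N = 0 then 1 else 0 := by
  have h := Int.alternating_sum_range_choose (n := N)
  have h2 : ((∑ i ∈ Finset.range (N + 1), (-1 : ℤ) ^ i * N.choose i : ℤ) : ℝ)
      = ((if N = 0 then 1 else 0 : ℤ) : ℝ) := by rw [h]
  push_cast at h2
  rw [h2]

lemma psiInnerSum (n m : ℕ) (hmn : m ≤ n) :
    ∑ k ∈ Finset.Icc m n, (-1 : ℝ) ^ (k + 1) * (n.choose k : ℝ) * (k.choose m : ℝ)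
    = if m = n then (-1 : ℝ) ^ (n + 1) else 0 := by
  have hrw : ∀ k ∈ Finset.Icc m n, (-1 : ℝ) ^ (k + 1) * (n.choose k : ℝ) * (k.choose m : ℝ)
      = (-1 : ℝ) ^ (k + 1) * (n.choose m : ℝ) * ((n - m).choose (k - m) : ℝ) := by
    intro k hk
    rw [Finset.mem_Icc] at hk
    have h1 := Nat.choose_mul (n := n) hk.1
    have h2 : ((n.choose k * k.choose m : ℕ) : ℝ)
        = ((n.choose m * (n-m).choose (k-m) : ℕ) : ℝ) := by rw [h1]
    push_cast at h2
    rw [mul_assoc, h2, mul_assoc]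
  rw [Finset.sum_congr rfl hrw]
  rw [show Finset.Icc m n = Finset.Ico m (n + 1) by rw [Finset.Ico_add_one_right_eq_Icc]]
  rw [Finset.sum_Ico_eq_sum_range]
  have hr : ∀ i ∈ Finset.range (n + 1 - m),
      (-1 : ℝ) ^ (m + i + 1) * (n.choose m : ℝ) * ((n - m).choose (m + i - m) : ℝ)
      = ((-1 : ℝ) ^ (m + 1) * (n.choose m : ℝ)) * ((-1:ℝ) ^ i * ((n - m).choose i : ℝ)) := by
    intro i _
    rw [Nat.add_sub_cancel_left, pow_add, pow_add, pow_add]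
    ring
  rw [Finset.sum_congr rfl hr, ← Finset.mul_sum]
  have hnm : n + 1 - m = (n - m) + 1 := by omega
  rw [hnm, psiAltSum (n - m)]
  by_cases h : m = n
  · subst h; simp
  · have : n - m ≠ 0 := by omega
    simp [h, this]

lemma psiSumOne (n : ℕ) (hn : 1 ≤ n) :
    ∑ k ∈ Finset.Icc 1 n, (-1 : ℝ) ^ (k + 1) * (n.choose k : ℝ) = 1 := by
  have h := psiAltSum n
  rw [if_neg (by omega), Finset.range_eq_Ico,
    Finset.sum_eq_sum_Ico_succ_bot (by omega : 0 < n + 1)] at h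
  simp only [pow_zero, Nat.choose_zero_right, Nat.cast_one, one_mul] at h
  have h2 : ∑ k ∈ Finset.Ico 1 (n + 1), (-1 : ℝ) ^ k * (n.choose k : ℝ) = -1 := by linarith
  rw [show Finset.Icc 1 n = Finset.Ico 1 (n + 1) by rw [Finset.Ico_add_one_right_eq_Icc]]
  have h3 : ∀ k ∈ Finset.Ico 1 (n+1), (-1 : ℝ) ^ (k + 1) * (n.choose k : ℝ)
      = -((-1 : ℝ) ^ k * (n.choose k : ℝ)) := by
    intro k _; rw [pow_succ]; ring
  rw [Finset.sum_congr rfl h3, Finset.sum_neg_distrib, h2, neg_neg]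

lemma psiSumD (n : ℕ) (hn : 1 ≤ n) (p δ : ℝ) :
    ∑ k ∈ Finset.Icc 1 n, (-1 : ℝ) ^ (k + 1) * (n.choose k : ℝ) * divPoly k p δ
    = (-1 : ℝ) ^ (n + 1) *
      ((∏ j ∈ Finset.Icc 1 (n - 1), (δ - (j : ℝ))) / (Nat.factorial (n - 1) : ℝ)) * p ^ n := by
  set c : ℕ → ℝ := fun m =>
    (∏ j ∈ Finset.Icc 1 (m - 1), (δ - (j : ℝ))) / (Nat.factorial (m - 1) : ℝ) with hc
  have h1 : ∑ k ∈ Finset.Icc 1 n, (-1 : ℝ) ^ (k + 1) * (n.choose k : ℝ) * divPoly k p δ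
      = ∑ k ∈ Finset.Icc 1 n, ∑ m ∈ Finset.Icc 1 k,
          ((-1 : ℝ) ^ (k + 1) * (n.choose k : ℝ) * (k.choose m : ℝ)) * (c m * p ^ m) := by
    apply Finset.sum_congr rfl
    intro k _
    rw [divPoly, Finset.mul_sum]
    apply Finset.sum_congr rfl
    intro m _
    ring
  rw [h1]
  rw [Finset.sum_comm' (t := fun k => Finset.Icc 1 k) (t' := Finset.Icc 1 n)
    (s' := fun m => Finset.Icc m n) (by intro x y; simp only [Finset.mem_Icc]; omega)]
  have h2 : ∀ m ∈ Finset.Icc 1 n, ∑ k ∈ Finset.Icc m n,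
      ((-1 : ℝ) ^ (k + 1) * (n.choose k : ℝ) * (k.choose m : ℝ)) * (c m * p ^ m)
      = (if m = n then (-1 : ℝ) ^ (n + 1) else 0) * (c m * p ^ m) := by
    intro m hm
    rw [Finset.mem_Icc] at hm
    rw [← Finset.sum_mul, psiInnerSum n m hm.2]
  rw [Finset.sum_congr rfl h2]
  rw [Finset.sum_eq_single n]
  · rw [if_pos rfl, hc]; ring
  · intro b _ hb; simp [hb]
  · intro h; exact absurd (Finset.mem_Icc.mpr ⟨hn, le_refl n⟩) h

lemma psiGamma (δ : ℝ) (hδ1 : δ < 1) (n : ℕ) (hn1 : 1 ≤ n) :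
    Real.Gamma ((n : ℝ) - δ)
      = (∏ j ∈ Finset.Icc 1 (n - 1), ((j : ℝ) - δ)) * Real.Gamma (1 - δ) := by
  induction n, hn1 using Nat.le_induction with
  | base => simp
  | succ n hn ih =>
    have hne : (n : ℝ) - δ ≠ 0 := by
      have : (1:ℝ) ≤ n := by exact_mod_cast hn
      nlinarith
    have h1 : ((n + 1 : ℕ) : ℝ) - δ = ((n : ℝ) - δ) + 1 := by push_cast; ring
    rw [h1, Real.Gamma_add_one hne, ih]
    have h2 : (n + 1 : ℕ) - 1 = (n - 1) + 1 := by omega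
    rw [h2, Finset.prod_Icc_succ_top (by omega : 1 ≤ (n - 1) + 1)]
    have h3 : (((n - 1) + 1 : ℕ) : ℝ) = (n : ℝ) := by
      have : (n - 1) + 1 = n := by omega
      rw [this]
    rw [h3]
    ring

theorem stmt3 (n : ℕ) (hn : 1 ≤ n) (p : ℝ) (hp0 : 0 ≤ p) (hp1 : p ≤ 1)
    (δ : ℝ) (hδ0 : 0 < δ) (hδ1 : δ < 1) :
    (fun Δ : ℝ =>
        (∑ k ∈ Finset.Icc 1 n, (-1 : ℝ) ^ (k + 1) * (n.choose k : ℝ) *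
          Real.exp (-Δ * divPoly k p δ)) - 1 +
        Δ * p ^ n * Real.Gamma ((n : ℝ) - δ) / (Real.Gamma n * Real.Gamma (1 - δ)))
      =O[nhds 0] (fun Δ : ℝ => Δ ^ 2) := by
  -- the linear coefficient equals the alternating sum of divPoly values
  have hGammaPos : 0 < Real.Gamma (1 - δ) := Real.Gamma_pos_of_pos (by linarith)
  have hfact : Real.Gamma (n : ℝ) = (Nat.factorial (n - 1) : ℝ) := by
    have h : ((n - 1 : ℕ) : ℝ) + 1 = (n : ℝ) := by
      have h' : (n - 1) + 1 = n := by omega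
      exact_mod_cast congrArg (Nat.cast : ℕ → ℝ) h'
    rw [← h, Real.Gamma_nat_eq_factorial]
  have hsign : (∏ j ∈ Finset.Icc 1 (n - 1), (δ - (j : ℝ)))
      = (-1 : ℝ) ^ (n - 1) * ∏ j ∈ Finset.Icc 1 (n - 1), ((j : ℝ) - δ) := by
    have : ∀ j ∈ Finset.Icc 1 (n - 1), (δ - (j : ℝ)) = (-1) * ((j : ℝ) - δ) := by
      intro j _; ring
    rw [Finset.prod_congr rfl this, Finset.prod_mul_distrib, Finset.prod_const,
      Nat.card_Icc]
    norm_num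
  have hcoeff : ∑ k ∈ Finset.Icc 1 n, (-1 : ℝ) ^ (k + 1) * (n.choose k : ℝ) * divPoly k p δ
      = p ^ n * Real.Gamma ((n : ℝ) - δ) / (Real.Gamma n * Real.Gamma (1 - δ)) := by
    rw [psiSumD n hn p δ, psiGamma δ hδ1 n hn, hfact, hsign]
    have hpow : (-1 : ℝ) ^ (n + 1) * (-1 : ℝ) ^ (n - 1) = 1 := by
      rw [← pow_add]
      have : n + 1 + (n - 1) = 2 * n := by omega
      rw [this, pow_mul]
      norm_num
    have hf : (Nat.factorial (n - 1) : ℝ) ≠ 0 := by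
      exact_mod_cast Nat.factorial_ne_zero (n - 1)
    field_simp
    linear_combination (∏ j ∈ Finset.Icc 1 (n - 1), ((j : ℝ) - δ)) * p ^ n * hpow
  -- rewrite the function as a sum of second-order remainders
  have hfun : ∀ Δ : ℝ,
      (∑ k ∈ Finset.Icc 1 n, (-1 : ℝ) ^ (k + 1) * (n.choose k : ℝ) *
          Real.exp (-Δ * divPoly k p δ)) - 1 +
        Δ * p ^ n * Real.Gamma ((n : ℝ) - δ) / (Real.Gamma n * Real.Gamma (1 - δ))
      = ∑ k ∈ Finset.Icc 1 n, ((-1 : ℝ) ^ (k + 1) * (n.choose k : ℝ)) *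
          (Real.exp (Δ * (-(divPoly k p δ))) - 1 - Δ * (-(divPoly k p δ))) := by
    intro Δ
    have e1 : ∀ k ∈ Finset.Icc 1 n, ((-1 : ℝ) ^ (k + 1) * (n.choose k : ℝ)) *
          (Real.exp (Δ * (-(divPoly k p δ))) - 1 - Δ * (-(divPoly k p δ)))
        = (-1 : ℝ) ^ (k + 1) * (n.choose k : ℝ) * Real.exp (-Δ * divPoly k p δ)
          - (-1 : ℝ) ^ (k + 1) * (n.choose k : ℝ)
          + Δ * ((-1 : ℝ) ^ (k + 1) * (n.choose k : ℝ) * divPoly k p δ) := by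
      intro k _
      rw [show Δ * (-(divPoly k p δ)) = -Δ * divPoly k p δ by ring]
      ring
    rw [Finset.sum_congr rfl e1, Finset.sum_add_distrib, Finset.sum_sub_distrib,
      ← Finset.mul_sum, psiSumOne n hn, hcoeff]
    ring
  have := funext hfun
  rw [show (fun Δ : ℝ =>
        (∑ k ∈ Finset.Icc 1 n, (-1 : ℝ) ^ (k + 1) * (n.choose k : ℝ) *
          Real.exp (-Δ * divPoly k p δ)) - 1 +
        Δ * p ^ n * Real.Gamma ((n : ℝ) - δ) / (Real.Gamma n * Real.Gamma (1 - δ)))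
      = (fun Δ : ℝ => ∑ k ∈ Finset.Icc 1 n, ((-1 : ℝ) ^ (k + 1) * (n.choose k : ℝ)) *
          (Real.exp (Δ * (-(divPoly k p δ))) - 1 - Δ * (-(divPoly k p δ)))) from funext hfun]
  apply Asymptotics.IsBigO.fun_sum
  intro k _
  exact (psiExpBigO (-(divPoly k p δ))).const_mul_left _
end

section
/- Fix an integer n ≥ 1, a real p with 0 < p ≤ 1, and a real δ with 0 < δ < 1. Define ψ_m(Δ) = ∑_{k=1}^m (−1)^{k+1} · (m choose k) · exp(−Δ · D_k(p,δ)) for positive integers m and real Δ. Then the limit as Δ → 0⁺ of (1 − ψ_{n+1}(Δ)) / (1 − ψ_n(Δ)) exists and equals p · (1 − δ/n). -/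
open Real Filter Set

/-- `ψ_m(Δ)`: probability of succeeding at least once in `m` transmissions. -/
noncomputable def psiSucc (m : ℕ) (p δ Δ : ℝ) : ℝ :=
  ∑ k ∈ Finset.Icc 1 m, (-1 : ℝ) ^ (k + 1) * (m.choose k : ℝ) *
    Real.exp (-Δ * divPoly k p δ)

noncomputable def coefA (p δ : ℝ) (i : ℕ) : ℝ :=
  ((∏ j ∈ Finset.Icc 1 (i - 1), (δ - (j : ℝ))) / (Nat.factorial (i - 1) : ℝ)) * p ^ i

lemma alt_sum_real (n : ℕ) :
    ∑ j ∈ Finset.range (n+1), (-1:ℝ)^j * (n.choose j : ℝ) = if n = 0 then 1 else 0 := by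
  have h := Int.alternating_sum_range_choose (n := n)
  have h2 : ((∑ i ∈ Finset.range (n+1), (-1:ℤ)^i * (n.choose i : ℤ) : ℤ) : ℝ)
      = ∑ j ∈ Finset.range (n+1), (-1:ℝ)^j * (n.choose j : ℝ) := by
    push_cast; rfl
  rw [← h2, h]
  split <;> simp

lemma key_orth (m i : ℕ) (hi1 : 1 ≤ i) (him : i ≤ m) :
    ∑ k ∈ Finset.Icc 1 m, (-1:ℝ)^(k+1) * (m.choose k : ℝ) * (k.choose i : ℝ)
      = if i = m then (-1:ℝ)^(m+1) else 0 := by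
  have hsub : ∑ k ∈ Finset.Icc 1 m, (-1:ℝ)^(k+1) * (m.choose k : ℝ) * (k.choose i : ℝ)
      = ∑ k ∈ Finset.Icc i m, (-1:ℝ)^(k+1) * (m.choose k : ℝ) * (k.choose i : ℝ) := by
    refine (Finset.sum_subset ?_ ?_).symm
    · intro k hk; simp only [Finset.mem_Icc] at *; omega
    · intro k hk hk'
      simp only [Finset.mem_Icc] at hk hk'
      have : k < i := by omega
      rw [Nat.choose_eq_zero_of_lt this]; simp
  rw [hsub, ← Finset.Ico_add_one_right_eq_Icc, Finset.sum_Ico_eq_sum_range]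
  have hmi : m + 1 - i = m - i + 1 := by omega
  rw [hmi]
  have hcm : ∀ j ∈ Finset.range (m - i + 1),
      (-1:ℝ)^(i+j+1) * (m.choose (i+j) : ℝ) * ((i+j).choose i : ℝ)
      = ((-1:ℝ)^(i+1) * (m.choose i : ℝ)) * ((-1:ℝ)^j * ((m-i).choose j : ℝ)) := by
    intro j hj
    simp only [Finset.mem_range] at hj
    have h1 : m.choose (i+j) * (i+j).choose i = m.choose i * (m - i).choose j := by
      have := Nat.choose_mul (n := m) (k := i + j) (s := i) (by omega)
      simpa using this
    have h1' : (m.choose (i+j) : ℝ) * ((i+j).choose i : ℝ) = (m.choose i : ℝ) * ((m-i).choose j : ℝ) := by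
      exact_mod_cast congrArg (Nat.cast : ℕ → ℝ) h1
    calc (-1:ℝ)^(i+j+1) * (m.choose (i+j) : ℝ) * ((i+j).choose i : ℝ)
        = (-1:ℝ)^(i+j+1) * ((m.choose (i+j) : ℝ) * ((i+j).choose i : ℝ)) := by ring
      _ = (-1:ℝ)^(i+j+1) * ((m.choose i : ℝ) * ((m-i).choose j : ℝ)) := by rw [h1']
      _ = ((-1:ℝ)^(i+1) * (m.choose i : ℝ)) * ((-1:ℝ)^j * ((m-i).choose j : ℝ)) := by
          rw [pow_add, pow_add, pow_add]; ring
  rw [Finset.sum_congr rfl hcm, ← Finset.mul_sum, alt_sum_real (m - i)]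
  by_cases h : i = m
  · subst h; simp
  · have : m - i ≠ 0 := by omega
    simp [this, h]

lemma divPoly_pad (p δ : ℝ) (k m : ℕ) (hk : k ≤ m) :
    divPoly k p δ = ∑ i ∈ Finset.Icc 1 m, (k.choose i : ℝ) * coefA p δ i := by
  unfold divPoly coefA
  have h := Finset.sum_subset (f := fun i => (k.choose i : ℝ) *
      (((∏ j ∈ Finset.Icc 1 (i - 1), (δ - (j : ℝ))) / (Nat.factorial (i - 1) : ℝ)) * p ^ i))
      (Finset.Icc_subset_Icc_right (a := 1) hk) ?_
  · rw [← h]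
    exact Finset.sum_congr rfl (fun i _ => by ring)
  · intro i hi hi'
    simp only [Finset.mem_Icc] at hi hi'
    rw [Nat.choose_eq_zero_of_lt (by omega : k < i)]; simp

lemma key_sum (p δ : ℝ) (m : ℕ) (hm : 1 ≤ m) :
    ∑ k ∈ Finset.Icc 1 m, (-1:ℝ)^(k+1) * (m.choose k : ℝ) * divPoly k p δ
      = (-1:ℝ)^(m+1) * coefA p δ m := by
  have : ∀ k ∈ Finset.Icc 1 m, (-1:ℝ)^(k+1) * (m.choose k : ℝ) * divPoly k p δ
      = ∑ i ∈ Finset.Icc 1 m, ((-1:ℝ)^(k+1) * (m.choose k : ℝ) * (k.choose i : ℝ)) * coefA p δ i := by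
    intro k hk
    simp only [Finset.mem_Icc] at hk
    rw [divPoly_pad p δ k m hk.2, Finset.mul_sum]
    exact Finset.sum_congr rfl (fun i _ => by ring)
  rw [Finset.sum_congr rfl this, Finset.sum_comm]
  have : ∀ i ∈ Finset.Icc 1 m,
      ∑ k ∈ Finset.Icc 1 m, ((-1:ℝ)^(k+1) * (m.choose k : ℝ) * (k.choose i : ℝ)) * coefA p δ i
      = (if i = m then (-1:ℝ)^(m+1) else 0) * coefA p δ i := by
    intro i hi
    simp only [Finset.mem_Icc] at hi
    rw [← Finset.sum_mul, key_orth m i hi.1 hi.2]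
  rw [Finset.sum_congr rfl this,
    Finset.sum_congr rfl (fun i _ => by rw [ite_mul, zero_mul] :
      ∀ i ∈ Finset.Icc 1 m, (if i = m then (-1:ℝ)^(m+1) else 0) * coefA p δ i
        = if i = m then (-1:ℝ)^(m+1) * coefA p δ i else 0),
    Finset.sum_ite_eq' (Finset.Icc 1 m) m (fun i => (-1:ℝ)^(m+1) * coefA p δ i)]
  simp [hm]

lemma psiSucc_zero (p δ : ℝ) (m : ℕ) (hm : 1 ≤ m) : psiSucc m p δ 0 = 1 := by
  unfold psiSucc
  simp only [neg_zero, zero_mul, Real.exp_zero, mul_one]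
  have h0 : ∑ j ∈ Finset.range (m+1), (-1:ℝ)^j * (m.choose j : ℝ) = 0 := by
    rw [alt_sum_real]; have : m ≠ 0 := by omega
    simp [this]
  have hsplit : ∑ j ∈ Finset.range (m+1), (-1:ℝ)^j * (m.choose j : ℝ)
      = 1 + ∑ k ∈ Finset.Icc 1 m, (-1:ℝ)^k * (m.choose k : ℝ) := by
    rw [← Finset.Ico_add_one_right_eq_Icc, Finset.sum_Ico_eq_sum_range,
      Finset.sum_range_succ' (fun j => (-1:ℝ)^j * (m.choose j : ℝ)) m]
    simp [add_comm]
  have hIcc : ∑ k ∈ Finset.Icc 1 m, (-1:ℝ)^k * (m.choose k : ℝ) = -1 := by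
    have := h0; rw [hsplit] at this; linarith
  have : ∑ k ∈ Finset.Icc 1 m, (-1:ℝ)^(k+1) * (m.choose k : ℝ)
      = -∑ k ∈ Finset.Icc 1 m, (-1:ℝ)^k * (m.choose k : ℝ) := by
    rw [← Finset.sum_neg_distrib]
    exact Finset.sum_congr rfl (fun k _ => by rw [pow_succ]; ring)
  rw [this, hIcc]; norm_num

lemma hasDeriv_f (p δ : ℝ) (m : ℕ) (hm : 1 ≤ m) :
    HasDerivAt (fun Δ => 1 - psiSucc m p δ Δ) ((-1:ℝ)^(m+1) * coefA p δ m) 0 := by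
  have h1 : HasDerivAt (fun Δ => psiSucc m p δ Δ)
      (∑ k ∈ Finset.Icc 1 m, (-1:ℝ)^(k+1) * (m.choose k : ℝ) * (-divPoly k p δ)) 0 := by
    apply HasDerivAt.fun_sum
    intro k hk
    have hinner : HasDerivAt (fun Δ : ℝ => -Δ * divPoly k p δ) (-divPoly k p δ) 0 := by
      simpa using ((hasDerivAt_id (0:ℝ)).neg.mul_const (divPoly k p δ))
    have := (hinner.exp).const_mul ((-1:ℝ)^(k+1) * (m.choose k : ℝ))
    simpa [mul_comm, mul_assoc, mul_left_comm] using this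
  have h2 := h1.const_sub 1
  refine h2.congr_deriv ?_
  rw [← key_sum p δ m hm, ← Finset.sum_neg_distrib]
  exact Finset.sum_congr rfl (fun k _ => by ring)

lemma tendsto_ratio (p δ : ℝ) (m : ℕ) (hm : 1 ≤ m) :
    Tendsto (fun Δ : ℝ => (1 - psiSucc m p δ Δ) / Δ) (nhdsWithin 0 (Ioi 0))
      (nhds ((-1:ℝ)^(m+1) * coefA p δ m)) := by
  have h := (hasDerivAt_iff_tendsto_slope).mp (hasDeriv_f p δ m hm)
  have h2 := h.mono_left (nhdsWithin_mono _ (fun x hx => by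
    simp only [mem_compl_iff, mem_singleton_iff]
    exact ne_of_gt hx))
  refine h2.congr' ?_
  filter_upwards [self_mem_nhdsWithin] with Δ hΔ
  simp [slope_def_field, psiSucc_zero p δ m hm, div_eq_mul_inv, mul_comm]

theorem stmt5 (n : ℕ) (hn : 1 ≤ n) (p : ℝ) (hp0 : 0 < p) (hp1 : p ≤ 1)
    (δ : ℝ) (hδ0 : 0 < δ) (hδ1 : δ < 1) :
    Tendsto (fun Δ : ℝ => (1 - psiSucc (n + 1) p δ Δ) / (1 - psiSucc n p δ Δ))
      (nhdsWithin 0 (Ioi 0)) (nhds (p * (1 - δ / n))) := by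
  set c : ℕ → ℝ := fun m => (-1:ℝ)^(m+1) * coefA p δ m with hc
  have hA_ne : ∀ m : ℕ, coefA p δ m ≠ 0 := by
    intro m
    unfold coefA
    apply mul_ne_zero
    · apply div_ne_zero
      · rw [Finset.prod_ne_zero_iff]
        intro j hj
        simp only [Finset.mem_Icc] at hj
        have : (1:ℝ) ≤ (j:ℝ) := by exact_mod_cast hj.1
        linarith
      · exact_mod_cast (Nat.factorial_pos _).ne'
    · exact pow_ne_zero _ hp0.ne'
  have hcn_ne : c n ≠ 0 := mul_ne_zero (pow_ne_zero _ (by norm_num)) (hA_ne n)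
  -- c (n+1) = c n * (p * (1 - δ/n))
  have hrel : c (n + 1) = c n * (p * (1 - δ / n)) := by
    obtain ⟨m, rfl⟩ : ∃ m, n = m + 1 := ⟨n - 1, by omega⟩
    simp only [hc]
    have e1 : coefA p δ (m + 2)
        = ((∏ j ∈ Finset.Icc 1 m, (δ - (j:ℝ))) * (δ - (m+1:ℕ)) / ((m+1:ℕ) * (Nat.factorial m))) * (p ^ (m+1) * p) := by
      unfold coefA
      have : m + 2 - 1 = m + 1 := rfl
      rw [this, Finset.prod_Icc_succ_top (by omega : 1 ≤ m + 1), Nat.factorial_succ]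
      push_cast
      ring
    have e2 : coefA p δ (m + 1)
        = ((∏ j ∈ Finset.Icc 1 m, (δ - (j:ℝ))) / (Nat.factorial m)) * p ^ (m+1) := by
      unfold coefA; rfl
    rw [e1, e2]
    have hm1 : ((m:ℝ) + 1) ≠ 0 := by positivity
    have hfac : ((Nat.factorial m : ℝ)) ≠ 0 := by exact_mod_cast (Nat.factorial_pos m).ne'
    have hδn : (1 : ℝ) - δ / ((m:ℕ)+1:ℕ) = (((m:ℝ)+1) - δ) / ((m:ℝ)+1) := by
      push_cast; field_simp
    push_cast
    rw [pow_succ, pow_succ]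
    field_simp
    ring
  have hdiv := (tendsto_ratio p δ (n+1) (by omega)).div (tendsto_ratio p δ n hn) hcn_ne
  have hval : c (n+1) / c n = p * (1 - δ / n) := by
    rw [hrel]; field_simp
  rw [← hval]
  refine hdiv.congr' ?_
  filter_upwards [self_mem_nhdsWithin] with Δ hΔ
  have hΔ' : (Δ:ℝ) ≠ 0 := ne_of_gt hΔ
  simp only [Pi.div_apply]
  rw [div_div_div_comm, div_self hΔ', div_one]
end

section
/- For every real δ with 0 < δ < 1, every real p with 0 ≤ p ≤ 1, and all reals θ₁, θ₂ > 0 with θ₁ ≠ θ₂, the improper integral δ · ∫_0^∞ [1 − (1 − p·θ₁/(u+θ₁))·(1 − p·θ₂/(u+θ₂))] · u^{δ−1} du converges and equals Γ(1+δ)·Γ(1−δ) · [ p·(θ₁^δ + θ₂^δ) + p² · (θ₁^δ·θ₂ − θ₂^δ·θ₁)/(θ₁ − θ₂) ]. -/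
open MeasureTheory Real Set

lemma beta_aux (δ : ℝ) (hδ0 : 0 < δ) (hδ1 : δ < 1) :
    IntegrableOn (fun t : ℝ => t ^ (δ - 1) * (1 - t) ^ (-δ)) (Ioo 0 1) volume ∧
    ∫ t in Ioo (0:ℝ) 1, t ^ (δ - 1) * (1 - t) ^ (-δ) = Real.Gamma δ * Real.Gamma (1 - δ) := by
  have h1 : (0:ℝ) < 1 - δ := by linarith
  have hC : IntervalIntegrable
      (fun x : ℝ => (x : ℂ) ^ ((δ:ℂ) - 1) * (1 - (x : ℂ)) ^ ((1 - (δ:ℂ)) - 1)) volume 0 1 := by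
    have := Complex.betaIntegral_convergent (u := (δ:ℂ)) (v := (1 - (δ:ℂ)))
      (by simpa using hδ0) (by simp [Complex.sub_re]; linarith)
    exact this
  have hCi : IntegrableOn
      (fun x : ℝ => (x : ℂ) ^ ((δ:ℂ) - 1) * (1 - (x : ℂ)) ^ ((1 - (δ:ℂ)) - 1)) (Ioo 0 1) volume :=
    ((intervalIntegrable_iff_integrableOn_Ioc_of_le zero_le_one).mp hC).mono_set Ioo_subset_Ioc_self
  have key : ∀ x ∈ Ioo (0:ℝ) 1,
      (x : ℂ) ^ ((δ:ℂ) - 1) * (1 - (x : ℂ)) ^ ((1 - (δ:ℂ)) - 1)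
        = ((x ^ (δ - 1) * (1 - x) ^ (-δ) : ℝ) : ℂ) := by
    intro x hx
    rw [Complex.ofReal_mul, Complex.ofReal_cpow hx.1.le, Complex.ofReal_cpow (by linarith [hx.2])]
    push_cast
    ring_nf
  have hiR : IntegrableOn (fun t : ℝ => t ^ (δ - 1) * (1 - t) ^ (-δ)) (Ioo 0 1) volume := by
    have := (hCi.congr_fun key measurableSet_Ioo).re
    exact IntegrableOn.congr_fun this (fun x _ => by simp) measurableSet_Ioo
  refine ⟨hiR, ?_⟩
  have hval : (Real.Gamma δ * Real.Gamma (1 - δ) : ℂ) =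
      ((∫ t in Ioo (0:ℝ) 1, t ^ (δ - 1) * (1 - t) ^ (-δ) : ℝ) : ℂ) := by
    have h2 : Complex.Gamma δ * Complex.Gamma (1 - (δ:ℂ)) =
        Complex.Gamma ((δ:ℂ) + (1 - δ)) * Complex.betaIntegral δ (1 - δ) :=
      Complex.Gamma_mul_Gamma_eq_betaIntegral (by simpa using hδ0)
        (by simp [Complex.sub_re]; linarith)
    rw [show (δ:ℂ) + (1 - δ) = 1 by ring, Complex.Gamma_one, one_mul] at h2
    have h3 : Complex.betaIntegral δ (1 - δ)
        = ∫ t in Ioo (0:ℝ) 1, ((t ^ (δ - 1) * (1 - t) ^ (-δ) : ℝ) : ℂ) := by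
      rw [Complex.betaIntegral, intervalIntegral.integral_of_le zero_le_one,
        integral_Ioc_eq_integral_Ioo]
      exact setIntegral_congr_fun measurableSet_Ioo key
    rw [h3] at h2
    have h4 : (∫ t in Ioo (0:ℝ) 1, ((t ^ (δ - 1) * (1 - t) ^ (-δ) : ℝ) : ℂ))
        = ((∫ t in Ioo (0:ℝ) 1, t ^ (δ - 1) * (1 - t) ^ (-δ) : ℝ) : ℂ) := integral_ofReal
    rw [h4] at h2
    rw [← Complex.Gamma_ofReal, ← Complex.Gamma_ofReal, Complex.ofReal_sub, Complex.ofReal_one]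
    exact h2
  exact_mod_cast hval.symm

lemma key_aux (δ : ℝ) (hδ0 : 0 < δ) (hδ1 : δ < 1) (θ : ℝ) (hθ : 0 < θ) :
    IntegrableOn (fun u : ℝ => θ / (u + θ) * u ^ (δ - 1)) (Ioi 0) volume ∧
    ∫ u in Ioi (0:ℝ), θ / (u + θ) * u ^ (δ - 1)
      = θ ^ δ * (∫ t in Ioo (0:ℝ) 1, t ^ (δ - 1) * (1 - t) ^ (-δ)) := by
  set f : ℝ → ℝ := fun t => θ * t / (1 - t) with hf
  set f' : ℝ → ℝ := fun t => θ / (1 - t) ^ 2 with hf'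
  have hderiv : ∀ t ∈ Ioo (0:ℝ) 1, HasDerivWithinAt f (f' t) (Ioo 0 1) t := by
    intro t ht
    have h1 : (1 : ℝ) - t ≠ 0 := by have := ht.2; intro h; linarith [sub_eq_zero.mp h]
    have h2 : HasDerivAt f ((θ * 1 * (1 - t) - θ * t * (-1)) / (1 - t) ^ 2) t := by
      exact (((hasDerivAt_id t).const_mul θ).div ((hasDerivAt_id t).const_sub 1) h1)
    have heq : (θ * 1 * (1 - t) - θ * t * (-1)) / (1 - t) ^ 2 = f' t := by
      rw [hf']; field_simp; ring
    exact (heq ▸ h2).hasDerivWithinAt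
  have hinj : InjOn f (Ioo 0 1) := by
    intro a ha b hb h
    have h1 : (1 : ℝ) - a ≠ 0 := by have := ha.2; intro h; linarith [sub_eq_zero.mp h]
    have h2 : (1 : ℝ) - b ≠ 0 := by have := hb.2; intro h; linarith [sub_eq_zero.mp h]
    rw [hf] at h; field_simp at h
    nlinarith [hθ]
  have himg : f '' Ioo 0 1 = Ioi (0:ℝ) := by
    ext u
    constructor
    · rintro ⟨t, ht, rfl⟩
      have : 0 < θ * t / (1 - t) := by
        apply div_pos (mul_pos hθ ht.1); linarith [ht.2]
      simpa [hf] using this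
    · intro hu
      have hu' : (0:ℝ) < u := hu
      refine ⟨u / (u + θ), ⟨div_pos hu' (by linarith), ?_⟩, ?_⟩
      · rw [div_lt_one (by linarith)]; linarith
      · have h3 : u + θ ≠ 0 := by positivity
        rw [hf]
        field_simp
        simp [hθ.ne']
  have hpt : ∀ t ∈ Ioo (0:ℝ) 1,
      |f' t| • (θ / (f t + θ) * (f t) ^ (δ - 1))
        = θ ^ δ * (t ^ (δ - 1) * (1 - t) ^ (-δ)) := by
    intro t ht
    have ht0 : 0 < t := ht.1
    have ht1 : 0 < 1 - t := by linarith [ht.2]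
    have hft : f t = θ * t / (1 - t) := rfl
    have hsum : f t + θ = θ / (1 - t) := by rw [hft]; field_simp; ring
    have hdivθ : θ / (f t + θ) = 1 - t := by
      rw [hsum]; field_simp
    have hftpos : 0 < f t := by rw [hft]; positivity
    have habs : |f' t| = θ / (1 - t) ^ 2 := by
      rw [hf']; exact abs_of_pos (by positivity)
    have hpow : (f t) ^ (δ - 1) = θ ^ (δ - 1) * t ^ (δ - 1) * (1 - t) ^ (1 - δ) := by
      rw [hft, div_rpow (by positivity) ht1.le, mul_rpow hθ.le ht0.le,
        div_eq_mul_inv, ← Real.rpow_neg ht1.le, neg_sub]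
    rw [smul_eq_mul, habs, hdivθ, hpow]
    have e1 : θ ^ δ = θ ^ ((δ - 1) + 1) := by ring_nf
    rw [Real.rpow_add hθ, Real.rpow_one] at e1
    have e2 : ((1:ℝ) - t) ^ (-δ) = (1 - t) ^ ((1 - δ) - 1) := by ring_nf
    rw [Real.rpow_sub ht1, Real.rpow_one] at e2
    rw [e1, e2, div_eq_mul_inv]
    field_simp
  have hbeta : IntegrableOn (fun t : ℝ => t ^ (δ - 1) * (1 - t) ^ (-δ)) (Ioo 0 1) volume :=
    (beta_aux δ hδ0 hδ1).1
  have hI : IntegrableOn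
      (fun t => |f' t| • (θ / (f t + θ) * (f t) ^ (δ - 1))) (Ioo 0 1) volume :=
    IntegrableOn.congr_fun (hbeta.const_mul (θ ^ δ)) (fun t ht => (hpt t ht).symm) measurableSet_Ioo
  constructor
  · rw [← himg]
    exact (integrableOn_image_iff_integrableOn_abs_deriv_smul measurableSet_Ioo hderiv hinj
      (fun u => θ / (u + θ) * u ^ (δ - 1))).mpr hI
  · rw [← himg, integral_image_eq_integral_abs_deriv_smul measurableSet_Ioo hderiv hinj
      (fun u => θ / (u + θ) * u ^ (δ - 1))]
    rw [setIntegral_congr_fun measurableSet_Ioo hpt]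
    exact integral_const_mul _ _

theorem stmt8 (δ : ℝ) (hδ0 : 0 < δ) (hδ1 : δ < 1) (p : ℝ) (hp0 : 0 ≤ p) (hp1 : p ≤ 1)
    (θ₁ θ₂ : ℝ) (hθ₁ : 0 < θ₁) (hθ₂ : 0 < θ₂) (hne : θ₁ ≠ θ₂) :
    IntegrableOn
      (fun u : ℝ =>
        (1 - (1 - p * θ₁ / (u + θ₁)) * (1 - p * θ₂ / (u + θ₂))) * u ^ (δ - 1))
      (Ioi 0) volume ∧
    δ * ∫ u in Ioi (0 : ℝ),
        (1 - (1 - p * θ₁ / (u + θ₁)) * (1 - p * θ₂ / (u + θ₂))) * u ^ (δ - 1) =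
      Real.Gamma (1 + δ) * Real.Gamma (1 - δ) *
        (p * (θ₁ ^ δ + θ₂ ^ δ) + p ^ 2 * (θ₁ ^ δ * θ₂ - θ₂ ^ δ * θ₁) / (θ₁ - θ₂)) := by
  obtain ⟨hI₁, hV₁⟩ := key_aux δ hδ0 hδ1 θ₁ hθ₁
  obtain ⟨hI₂, hV₂⟩ := key_aux δ hδ0 hδ1 θ₂ hθ₂
  obtain ⟨hIβ, hVβ⟩ := beta_aux δ hδ0 hδ1
  rw [hVβ] at hV₁ hV₂
  have hd : θ₁ - θ₂ ≠ 0 := sub_ne_zero.mpr hne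
  set c₁ : ℝ := p + p ^ 2 * θ₂ / (θ₁ - θ₂) with hc₁
  set c₂ : ℝ := p - p ^ 2 * θ₁ / (θ₁ - θ₂) with hc₂
  have hpt : ∀ u ∈ Ioi (0:ℝ),
      (1 - (1 - p * θ₁ / (u + θ₁)) * (1 - p * θ₂ / (u + θ₂))) * u ^ (δ - 1)
        = c₁ * (θ₁ / (u + θ₁) * u ^ (δ - 1)) + c₂ * (θ₂ / (u + θ₂) * u ^ (δ - 1)) := by
    intro u hu
    have hu0 : (0:ℝ) < u := hu
    have h1 : u + θ₁ ≠ 0 := by positivity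
    have h2 : u + θ₂ ≠ 0 := by positivity
    rw [hc₁, hc₂]
    field_simp
    ring
  have hIsum : IntegrableOn
      (fun u : ℝ => c₁ * (θ₁ / (u + θ₁) * u ^ (δ - 1)) + c₂ * (θ₂ / (u + θ₂) * u ^ (δ - 1)))
      (Ioi 0) volume := (hI₁.const_mul c₁).add (hI₂.const_mul c₂)
  constructor
  · exact IntegrableOn.congr_fun hIsum (fun u hu => (hpt u hu).symm) measurableSet_Ioi
  · rw [setIntegral_congr_fun measurableSet_Ioi hpt,
      integral_add (hI₁.const_mul c₁) (hI₂.const_mul c₂),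
      integral_const_mul, integral_const_mul, hV₁, hV₂]
    have hG : Real.Gamma (1 + δ) = δ * Real.Gamma δ := by
      rw [add_comm, Real.Gamma_add_one hδ0.ne']
    rw [hG, hc₁, hc₂]
    field_simp
    ring
end

section
/- For every real p with 0 ≤ p ≤ 1, every real δ with 0 ≤ δ ≤ 1, and every real ν ≠ 0, one has 2·cosh(ν·δ) − p · sinh(ν·(1−δ))/sinh(ν) ≥ 2 − p·(1−δ). -/
open Real

lemma key_sinh (t : ℝ) (ht0 : 0 ≤ t) (ht1 : t ≤ 1) {ν : ℝ} (hν : 0 ≤ ν) :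
    Real.sinh (ν * t) ≤ t * Real.sinh ν := by
  set f : ℝ → ℝ := fun x => t * Real.sinh x - Real.sinh (x * t) with hf
  have hdiff : ∀ x, HasDerivAt f (t * Real.cosh x - Real.cosh (x * t) * t) x := by
    intro x
    exact ((Real.hasDerivAt_sinh x).const_mul t).sub
      ((Real.hasDerivAt_sinh (x * t)).comp x (by simpa using (hasDerivAt_id x).mul_const t) :
        HasDerivAt (Real.sinh ∘ fun y => y * t) (Real.cosh (x * t) * t) x)
  have hmono : MonotoneOn f (Set.Ici 0) := by
    apply monotoneOn_of_deriv_nonneg (convex_Ici 0)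
    · exact (Continuous.sub (continuous_const.mul Real.continuous_sinh)
        (Real.continuous_sinh.comp (continuous_id.mul continuous_const))).continuousOn
    · intro x _
      exact (hdiff x).differentiableAt.differentiableWithinAt
    · intro x hx
      rw [interior_Ici] at hx
      rw [(hdiff x).deriv]
      have hxt : Real.cosh (x * t) ≤ Real.cosh x := by
        rw [Real.cosh_le_cosh]
        rw [abs_mul]
        calc |x| * |t| ≤ |x| * 1 := by
              apply mul_le_mul_of_nonneg_left _ (abs_nonneg x)
              rw [abs_of_nonneg ht0]; exact ht1
          _ = |x| := mul_one _
      nlinarith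
  have h0 : f 0 ≤ f ν := hmono (Set.self_mem_Ici) hν hν
  simp only [hf, Real.sinh_zero, mul_zero, zero_mul, Real.sinh_zero, sub_zero] at h0
  linarith

lemma main_pos (p : ℝ) (hp0 : 0 ≤ p) (hp1 : p ≤ 1) (δ : ℝ) (hδ0 : 0 ≤ δ) (hδ1 : δ ≤ 1)
    (ν : ℝ) (hν : 0 < ν) :
    2 - p * (1 - δ) ≤
      2 * Real.cosh (ν * δ) - p * Real.sinh (ν * (1 - δ)) / Real.sinh ν := by
  have hs : 0 < Real.sinh ν := by rwa [Real.sinh_pos_iff]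
  have h1 : Real.sinh (ν * (1 - δ)) ≤ (1 - δ) * Real.sinh ν :=
    key_sinh (1 - δ) (by linarith) (by linarith) hν.le
  have h2 : p * Real.sinh (ν * (1 - δ)) / Real.sinh ν ≤ p * (1 - δ) := by
    rw [div_le_iff₀ hs]
    nlinarith
  have h3 : 1 ≤ Real.cosh (ν * δ) := Real.one_le_cosh _
  linarith

theorem stmt10 (p : ℝ) (hp0 : 0 ≤ p) (hp1 : p ≤ 1) (δ : ℝ) (hδ0 : 0 ≤ δ) (hδ1 : δ ≤ 1)
    (ν : ℝ) (hν : ν ≠ 0) :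
    2 - p * (1 - δ) ≤
      2 * Real.cosh (ν * δ) - p * Real.sinh (ν * (1 - δ)) / Real.sinh ν := by
  rcases hν.lt_or_gt with h | h
  · have := main_pos p hp0 hp1 δ hδ0 hδ1 (-ν) (by linarith)
    have e1 : Real.cosh (-ν * δ) = Real.cosh (ν * δ) := by
      rw [neg_mul, Real.cosh_neg]
    have e2 : Real.sinh (-ν * (1 - δ)) = -Real.sinh (ν * (1 - δ)) := by
      rw [neg_mul, Real.sinh_neg]
    have e3 : Real.sinh (-ν) = -Real.sinh ν := Real.sinh_neg ν
    rw [e1, e2, e3] at this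
    have hsν : Real.sinh ν ≠ 0 := by
      simp only [ne_eq, Real.sinh_eq_zero]; exact hν
    rw [mul_neg, neg_div, div_neg, neg_neg] at this
    exact this
  · exact main_pos p hp0 hp1 δ hδ0 hδ1 ν h
end

section
/- For every real Δ > 0, every real p with 0 < p ≤ 1, and every real δ with 0 < δ < 1, one has (1 − exp(−Δ·p·(1 − p·(1−δ)))) / (exp(Δ·p) − 1) < 1 − p·(1−δ). -/
open Real

theorem stmt12 (Δ : ℝ) (hΔ : 0 < Δ) (p : ℝ) (hp0 : 0 < p) (hp1 : p ≤ 1)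
    (δ : ℝ) (hδ0 : 0 < δ) (hδ1 : δ < 1) :
    (1 - Real.exp (-Δ * p * (1 - p * (1 - δ)))) / (Real.exp (Δ * p) - 1) <
      1 - p * (1 - δ) := by
  set x := Δ * p with hxdef
  set c := 1 - p * (1 - δ) with hcdef
  have hx : 0 < x := mul_pos hΔ hp0
  have hc : 0 < c := by nlinarith
  have harg : -Δ * p * (1 - p * (1 - δ)) = -(x * c) := by ring
  rw [harg]
  have h1 : 1 - Real.exp (-(x * c)) < x * c := by
    have := Real.add_one_lt_exp (x := -(x * c)) (by positivity |> (fun h => (neg_ne_zero.mpr (ne_of_gt h))))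
    linarith
  have h2 : x < Real.exp x - 1 := by
    have := Real.add_one_lt_exp (ne_of_gt hx)
    linarith
  have hd : 0 < Real.exp x - 1 := lt_trans hx h2
  rw [div_lt_iff₀ hd]
  calc 1 - Real.exp (-(x * c)) < x * c := h1
    _ < (Real.exp x - 1) * c := by nlinarith
    _ = c * (Real.exp x - 1) := by ring
end

section
/- For every real β with 0 < β < 1, the series ∑_{n=0}^∞ [ ∑_{k=0}^n (−1)^k · (n choose k) · 1/(1 + k·β) ] converges and its sum equals 1/(1 − β). -/
open Real Filter Finset

private lemma key14 : ∀ (n : ℕ) (x : ℝ), 0 < x →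
    ∑ k ∈ Finset.range (n+1), (-1:ℝ)^k * (n.choose k : ℝ) / (x + k)
      = (n.factorial : ℝ) / ∏ j ∈ Finset.range (n+1), (x + (j:ℝ)) := by
  intro n
  induction n with
  | zero => intro x hx; simp
  | succ n ih =>
    intro x hx
    have hA : (0:ℝ) < ∏ j ∈ Finset.range (n+1), (x + (j:ℝ)) :=
      Finset.prod_pos fun j _ => by positivity
    have hB : (0:ℝ) < ∏ j ∈ Finset.range (n+1), ((x+1) + (j:ℝ)) :=
      Finset.prod_pos fun j _ => by positivity
    have hC1 : ∏ j ∈ Finset.range (n+2), (x + (j:ℝ))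
        = (∏ j ∈ Finset.range (n+1), (x + (j:ℝ))) * (x + ((n:ℝ)+1)) := by
      rw [Finset.prod_range_succ]; push_cast; ring
    have hC2 : ∏ j ∈ Finset.range (n+2), (x + (j:ℝ))
        = (∏ j ∈ Finset.range (n+1), ((x+1) + (j:ℝ))) * x := by
      rw [Finset.prod_range_succ' (fun j => (x + (j:ℝ)))]
      have : ∀ j ∈ Finset.range (n+1), (x + ((j:ℕ)+1 : ℕ)) = (x+1) + (j:ℝ) := by
        intro j _; push_cast; ring
      rw [Finset.prod_congr rfl this]
      simp
    have hS2 : ∑ k ∈ Finset.range (n+1), (-1:ℝ)^k * (n.choose (k+1) : ℝ) / (x + ((k:ℝ)+1))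
        = 1/x - ∑ k ∈ Finset.range (n+1), (-1:ℝ)^k * (n.choose k : ℝ) / (x + k) := by
      have hT := Finset.sum_range_succ' (fun k => (-1:ℝ)^k * (n.choose k : ℝ) / (x + k)) (n+1)
      rw [Finset.sum_range_succ (fun k => (-1:ℝ)^k * (n.choose k : ℝ) / (x + k)) (n+1)] at hT
      simp only [Nat.choose_succ_self, Nat.cast_zero] at hT
      push_cast at hT
      have hneg : ∑ k ∈ Finset.range (n+1), (-1:ℝ)^(k+1) * (n.choose (k+1):ℝ) / (x + ((k:ℝ)+1))
          = -∑ k ∈ Finset.range (n+1), (-1:ℝ)^k * (n.choose (k+1):ℝ) / (x + ((k:ℝ)+1)) := by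
        rw [← Finset.sum_neg_distrib]
        exact Finset.sum_congr rfl fun k _ => by ring
      rw [hneg] at hT
      simp only [Nat.choose_zero_right, Nat.cast_one, pow_zero] at hT
      simp only [mul_zero, zero_div, add_zero, one_mul, mul_one] at hT
      linarith [hT]
    have h1 : ∑ k ∈ Finset.range (n+2), (-1:ℝ)^k * ((n+1).choose k : ℝ) / (x + k)
        = 1/x
          - ∑ k ∈ Finset.range (n+1), (-1:ℝ)^k * (n.choose k : ℝ) / ((x+1) + k)
          - ∑ k ∈ Finset.range (n+1), (-1:ℝ)^k * (n.choose (k+1) : ℝ) / (x + ((k:ℝ)+1)) := by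
      rw [Finset.sum_range_succ' (fun k => (-1:ℝ)^k * ((n+1).choose k : ℝ) / (x + k))]
      have hterm : ∀ k ∈ Finset.range (n+1),
          (-1:ℝ)^(k+1) * (((n+1).choose (k+1) : ℕ) : ℝ) / (x + ((k+1 : ℕ) : ℝ))
          = -((-1:ℝ)^k * (n.choose k : ℝ) / ((x+1) + k))
            - ((-1:ℝ)^k * (n.choose (k+1) : ℝ) / (x + ((k:ℝ)+1))) := by
        intro k _
        have hd : x + ((k:ℝ)+1) ≠ 0 := by positivity
        have hd' : (x+1) + (k:ℝ) ≠ 0 := by positivity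
        have hxx : (x+1) + (k:ℝ) = x + ((k:ℝ)+1) := by ring
        rw [Nat.choose_succ_succ]
        push_cast
        rw [hxx]
        field_simp
        ring
      rw [Finset.sum_congr rfl hterm, Finset.sum_sub_distrib, Finset.sum_neg_distrib]
      simp only [Nat.choose_zero_right, Nat.cast_one, pow_zero, Nat.cast_zero, add_zero, one_mul, mul_one]
      ring
    rw [h1, ih (x+1) (by linarith), hS2, ih x hx, hC1]
    have hBA : (∏ j ∈ Finset.range (n+1), ((x+1) + (j:ℝ))) * x
        = (∏ j ∈ Finset.range (n+1), (x + (j:ℝ))) * (x + ((n:ℝ)+1)) := hC2.symm.trans hC1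
    have hfac : ((n+1).factorial : ℝ) = ((n:ℝ)+1) * (n.factorial : ℝ) := by
      rw [Nat.factorial_succ]; push_cast; ring
    have hx1 : (0:ℝ) < x + ((n:ℝ)+1) := by positivity
    have hBeq : (∏ j ∈ Finset.range (n+1), ((x+1) + (j:ℝ)))
        = (∏ j ∈ Finset.range (n+1), (x + (j:ℝ))) * (x + ((n:ℝ)+1)) / x := by
      rw [eq_div_iff hx.ne']; exact hBA
    rw [hfac, hBeq]
    field_simp
    ring

private lemma inner14 (β : ℝ) (hβ0 : 0 < β) (n : ℕ) :
    ∑ k ∈ Finset.range (n + 1), (-1 : ℝ) ^ k * (n.choose k : ℝ) * (1 / (1 + k * β))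
      = ∏ j ∈ Finset.range n, (((j:ℝ)+1) * β / (1 + ((j:ℝ)+1) * β)) := by
  have hx : (0:ℝ) < 1/β := by positivity
  have h2 : ∑ k ∈ Finset.range (n + 1), (-1 : ℝ) ^ k * (n.choose k : ℝ) * (1 / (1 + k * β))
      = (1/β) * ∑ k ∈ Finset.range (n+1), (-1:ℝ)^k * (n.choose k : ℝ) / ((1/β) + k) := by
    rw [Finset.mul_sum]
    refine Finset.sum_congr rfl fun k _ => ?_
    have hk : (0:ℝ) < 1 + (k:ℝ) * β := by positivity
    have hk' : (0:ℝ) < 1/β + (k:ℝ) := by positivity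
    field_simp
  rw [h2, key14 n (1/β) hx]
  have hP : ∏ j ∈ Finset.range (n+1), ((1/β) + (j:ℝ))
      = (1/β) * ∏ j ∈ Finset.range n, ((1 + ((j:ℝ)+1) * β) / β) := by
    rw [Finset.prod_range_succ' (fun j => (1/β) + (j:ℝ))]
    have hstep : ∀ j ∈ Finset.range n, (1/β) + (((j:ℕ)+1 : ℕ) : ℝ) = (1 + ((j:ℝ)+1) * β) / β := by
      intro j _; push_cast; field_simp
    rw [Finset.prod_congr rfl hstep]
    simp [mul_comm]
  rw [hP, Finset.prod_div_distrib, Finset.prod_const]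
  have hfac : (n.factorial : ℝ) = ∏ j ∈ Finset.range n, ((j:ℝ)+1) := by
    rw [← Finset.prod_range_add_one_eq_factorial]; push_cast; ring
  have hprodpos : (0:ℝ) < ∏ j ∈ Finset.range n, (1 + ((j:ℝ)+1) * β) :=
    Finset.prod_pos fun j _ => by positivity
  rw [hfac, Finset.prod_div_distrib, Finset.prod_mul_distrib, Finset.prod_const]
  field_simp

private noncomputable def aa (β : ℝ) (n : ℕ) : ℝ :=
  ∏ j ∈ Finset.range n, (((j:ℝ)+1) * β / (1 + ((j:ℝ)+1) * β))

private noncomputable def tt14 (β : ℝ) (N : ℕ) : ℝ := (1 + (N:ℝ) * β) * aa β N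

theorem stmt14 (β : ℝ) (hβ0 : 0 < β) (hβ1 : β < 1) :
    Tendsto
      (fun N : ℕ => ∑ n ∈ Finset.range N,
        ∑ k ∈ Finset.range (n + 1), (-1 : ℝ) ^ k * (n.choose k : ℝ) * (1 / (1 + k * β)))
      atTop (nhds (1 / (1 - β))) := by
  have hapos : ∀ n, 0 < aa β n := fun n =>
    Finset.prod_pos fun j _ => by positivity
  have htpos : ∀ N, 0 < tt14 β N := fun N => by
    have := hapos N
    have h2 : (0:ℝ) < 1 + (N:ℝ)*β := by positivity
    exact mul_pos h2 this
  have haS : ∀ N : ℕ, aa β (N+1) = aa β N * (((N:ℝ)+1) * β / (1 + ((N:ℝ)+1) * β)) := by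
    intro N
    rw [aa, aa, Finset.prod_range_succ]
  -- partial sum identity
  have hps : ∀ N, (1 - β) * ∑ n ∈ Finset.range N, aa β n = 1 - tt14 β N := by
    intro N
    induction N with
    | zero => simp [tt14, aa]
    | succ N ih =>
      rw [Finset.sum_range_succ, mul_add, ih]
      have hd : (0:ℝ) < 1 + ((N:ℝ)+1) * β := by positivity
      have htS : tt14 β (N+1) = aa β N * (((N:ℝ)+1) * β) := by
        rw [tt14, haS N]
        push_cast
        field_simp
      rw [htS, tt14]
      ring
  -- t as a product
  have htprod : ∀ N, tt14 β N = ∏ j ∈ Finset.range N, (((j:ℝ)+1) * β / (1 + (j:ℝ) * β)) := by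
    intro N
    induction N with
    | zero => simp [tt14, aa]
    | succ N ih =>
      rw [Finset.prod_range_succ, ← ih]
      have hd : (0:ℝ) < 1 + ((N:ℝ)+1) * β := by positivity
      have hd' : (0:ℝ) < 1 + (N:ℝ) * β := by positivity
      rw [tt14, haS N, tt14]
      push_cast
      field_simp
  -- log bound
  have hlogle : ∀ N, Real.log (tt14 β N)
      ≤ (-(1 - β) / (1 + β)) * ∑ j ∈ Finset.range N, (1 / ((j:ℝ) + 1)) := by
    intro N
    rw [htprod N]
    have hne : ∀ j ∈ Finset.range N, (((j:ℝ)+1) * β / (1 + (j:ℝ) * β)) ≠ 0 := by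
      intro j _
      have h1 : (0:ℝ) < ((j:ℝ)+1) * β := by positivity
      have h2 : (0:ℝ) < 1 + (j:ℝ) * β := by positivity
      positivity
    rw [Real.log_prod hne, Finset.mul_sum]
    refine Finset.sum_le_sum fun j _ => ?_
    have h2 : (0:ℝ) < 1 + (j:ℝ) * β := by positivity
    have h3 : (0:ℝ) < ((j:ℝ)+1) * β / (1 + (j:ℝ) * β) := by positivity
    have h4 := Real.log_le_sub_one_of_pos h3
    have h5 : ((j:ℝ)+1) * β / (1 + (j:ℝ) * β) - 1 = -(1 - β) / (1 + (j:ℝ) * β) := by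
      field_simp
      ring
    rw [h5] at h4
    refine h4.trans ?_
    rw [div_mul_div_comm, mul_one, div_le_div_iff₀ h2 (by positivity)]
    have hj : (0:ℝ) ≤ (j:ℝ) := Nat.cast_nonneg j
    nlinarith
  -- log t N → -∞
  have hlogbot : Tendsto (fun N => Real.log (tt14 β N)) atTop atBot := by
    have hc : (-(1 - β) / (1 + β)) < 0 := by
      apply div_neg_of_neg_of_pos <;> linarith
    have hH := Real.tendsto_sum_range_one_div_nat_succ_atTop
    have hmul : Tendsto (fun N : ℕ => (-(1 - β) / (1 + β)) *
        ∑ j ∈ Finset.range N, (1 / ((j:ℝ) + 1))) atTop atBot :=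
      (tendsto_const_mul_atBot_of_neg hc).mpr hH
    exact tendsto_atBot_mono hlogle hmul
  have httends : Tendsto (tt14 β) atTop (nhds 0) := by
    have h := Real.tendsto_exp_atBot.comp hlogbot
    refine h.congr fun N => ?_
    exact Real.exp_log (htpos N)
  have hβne : (1:ℝ) - β ≠ 0 := by linarith
  have hfinal : Tendsto (fun N : ℕ => (1 - tt14 β N) / (1 - β)) atTop (nhds (1 / (1 - β))) := by
    have h : Tendsto (fun N : ℕ => (1 - tt14 β N)) atTop (nhds (1 - 0)) :=
      tendsto_const_nhds.sub httends
    simpa using h.div_const (1 - β)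
  have hinner : ∀ n : ℕ,
      ∑ k ∈ Finset.range (n + 1), (-1 : ℝ) ^ k * (n.choose k : ℝ) * (1 / (1 + k * β))
        = aa β n := fun n => (inner14 β hβ0 n).trans rfl
  refine hfinal.congr fun N => ?_
  rw [div_eq_iff hβne, ← hps N, Finset.sum_congr rfl fun n _ => hinner n]
  ring
end

section
/- Fix an integer n ≥ 1. For every fixed real δ with 0 ≤ δ ≤ 1, the function p ↦ D_n(p,δ) is monotone nondecreasing and concave on [0,1]; and for every fixed real p with 0 ≤ p ≤ 1, the function δ ↦ D_n(p,δ) is monotone nondecreasing and convex on [0,1], increasing from 1 − (1−p)^n at δ = 0 to n·p at δ = 1. -/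
open Real Set

noncomputable def rC (x : ℝ) (k : ℕ) : ℝ :=
  (∏ l ∈ Finset.range k, (x - (l : ℝ))) / (Nat.factorial k : ℝ)

lemma rC_zero (x : ℝ) : rC x 0 = 1 := by simp [rC]

lemma rC_pascal (x : ℝ) (k : ℕ) : rC (x + 1) (k + 1) = rC x (k + 1) + rC x k := by
  have h1 : (∏ l ∈ Finset.range (k + 1), (x + 1 - (l : ℝ))) =
      (∏ l ∈ Finset.range k, (x - (l : ℝ))) * (x + 1) := by
    rw [Finset.prod_range_succ']
    congr 1
    · exact Finset.prod_congr rfl fun l _ => by push_cast; ring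
    · norm_num
  have h2 : (∏ l ∈ Finset.range (k + 1), (x - (l : ℝ))) =
      (∏ l ∈ Finset.range k, (x - (l : ℝ))) * (x - (k : ℝ)) := Finset.prod_range_succ _ _
  have hf : ((Nat.factorial k : ℝ)) ≠ 0 := by
    exact_mod_cast Nat.factorial_ne_zero k
  have hk1 : ((k : ℝ) + 1) ≠ 0 := by positivity
  unfold rC
  rw [h1, h2, Nat.factorial_succ]
  push_cast
  field_simp
  ring

lemma rC_vandermonde (j : ℕ) : ∀ (k : ℕ) (x : ℝ),
    ∑ i ∈ Finset.range (k + 1), (j.choose (k - i) : ℝ) * rC x i = rC (x + (j : ℝ)) k := by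
  induction j with
  | zero =>
    intro k x
    rw [Finset.sum_eq_single k]
    · simp [Nat.sub_self]
    · intro i hi hne
      have hik : i < k := by
        simp only [Finset.mem_range] at hi; omega
      rw [Nat.choose_eq_zero_of_lt (by omega)]
      simp
    · intro h
      exact absurd (Finset.self_mem_range_succ k) h
  | succ j ih =>
    intro k x
    cases k with
    | zero =>
      simp [rC]
    | succ s =>
      have e1 : ∀ i ∈ Finset.range (s + 1),
          ((j + 1).choose (s + 1 - i) : ℝ) * rC x i
          = (j.choose (s + 1 - i) : ℝ) * rC x i + (j.choose (s - i) : ℝ) * rC x i := by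
        intro i hi
        have hi' : i ≤ s := by simpa [Nat.lt_succ_iff] using hi
        have h1 : s + 1 - i = (s - i) + 1 := by omega
        rw [h1, Nat.choose_succ_succ]
        have h2 : s - i + 1 = s + 1 - i := by omega
        push_cast
        ring
      have step1 : ∑ i ∈ Finset.range (s + 2), ((j + 1).choose (s + 1 - i) : ℝ) * rC x i
          = ∑ i ∈ Finset.range (s + 1), ((j + 1).choose (s + 1 - i) : ℝ) * rC x i
            + rC x (s + 1) := by
        rw [Finset.sum_range_succ]
        simp
      have step2 : ∑ i ∈ Finset.range (s + 1), ((j + 1).choose (s + 1 - i) : ℝ) * rC x i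
          = ∑ i ∈ Finset.range (s + 1), (j.choose (s + 1 - i) : ℝ) * rC x i
            + ∑ i ∈ Finset.range (s + 1), (j.choose (s - i) : ℝ) * rC x i := by
        rw [← Finset.sum_add_distrib]
        exact Finset.sum_congr rfl e1
      have step3 : ∑ i ∈ Finset.range (s + 2), (j.choose (s + 1 - i) : ℝ) * rC x i
          = ∑ i ∈ Finset.range (s + 1), (j.choose (s + 1 - i) : ℝ) * rC x i
            + rC x (s + 1) := by
        rw [Finset.sum_range_succ]
        simp
      have hx : x + ((j : ℕ) + 1 : ℕ) = (x + (j : ℝ)) + 1 := by push_cast; ring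
      rw [step1, step2]
      have : ∑ i ∈ Finset.range (s + 1), (j.choose (s + 1 - i) : ℝ) * rC x i
            + ∑ i ∈ Finset.range (s + 1), (j.choose (s - i) : ℝ) * rC x i + rC x (s + 1)
          = (∑ i ∈ Finset.range (s + 2), (j.choose (s + 1 - i) : ℝ) * rC x i)
            + ∑ i ∈ Finset.range (s + 1), (j.choose (s - i) : ℝ) * rC x i := by
        rw [step3]; ring
      rw [this, ih (s + 1) x, ih s x]
      push_cast
      rw [show x + ((j : ℝ) + 1) = (x + (j : ℝ)) + 1 by ring]
      exact (rC_pascal (x + (j : ℝ)) s).symm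
lemma bernstein_transform (m : ℕ) (c : ℕ → ℝ) (p : ℝ) :
    ∑ j ∈ Finset.range (m + 1),
        (m.choose j : ℝ) * (∑ i ∈ Finset.range (j + 1), (j.choose i : ℝ) * c i) * p ^ j
          * (1 - p) ^ (m - j)
      = ∑ i ∈ Finset.range (m + 1), (m.choose i : ℝ) * c i * p ^ i := by
  have expand : ∀ j ∈ Finset.range (m + 1),
      (m.choose j : ℝ) * (∑ i ∈ Finset.range (j + 1), (j.choose i : ℝ) * c i) * p ^ j
          * (1 - p) ^ (m - j)
      = ∑ i ∈ Finset.range (j + 1),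
          (m.choose j : ℝ) * ((j.choose i : ℝ) * c i) * p ^ j * (1 - p) ^ (m - j) := by
    intro j _
    rw [Finset.mul_sum, Finset.sum_mul, Finset.sum_mul]
  rw [Finset.sum_congr rfl expand]
  rw [Finset.sum_comm' (t' := Finset.range (m + 1)) (s' := fun i => Finset.Icc i m)
    (by intro j i; simp only [Finset.mem_range, Finset.mem_Icc]; omega)]
  refine Finset.sum_congr rfl fun i hi => ?_
  have him : i ≤ m := by simpa [Nat.lt_succ_iff] using hi
  have e1 : ∀ j ∈ Finset.Icc i m,
      (m.choose j : ℝ) * ((j.choose i : ℝ) * c i) * p ^ j * (1 - p) ^ (m - j)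
      = ((m.choose i : ℝ) * c i) * (((m - i).choose (j - i) : ℝ) * p ^ j * (1 - p) ^ (m - j)) := by
    intro j hj
    simp only [Finset.mem_Icc] at hj
    have hnat := Nat.choose_mul (n := m) hj.1
    have hcast : (m.choose j : ℝ) * (j.choose i : ℝ)
        = (m.choose i : ℝ) * ((m - i).choose (j - i) : ℝ) := by exact_mod_cast hnat
    calc (m.choose j : ℝ) * ((j.choose i : ℝ) * c i) * p ^ j * (1 - p) ^ (m - j)
        = ((m.choose j : ℝ) * (j.choose i : ℝ)) * c i * p ^ j * (1 - p) ^ (m - j) := by ring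
      _ = ((m.choose i : ℝ) * ((m - i).choose (j - i) : ℝ)) * c i * p ^ j
            * (1 - p) ^ (m - j) := by rw [hcast]
      _ = ((m.choose i : ℝ) * c i) * (((m - i).choose (j - i) : ℝ) * p ^ j
            * (1 - p) ^ (m - j)) := by ring
  rw [Finset.sum_congr rfl e1, ← Finset.mul_sum]
  have e2 : ∑ j ∈ Finset.Icc i m, ((m - i).choose (j - i) : ℝ) * p ^ j * (1 - p) ^ (m - j)
      = p ^ i := by
    rw [← Finset.Ico_add_one_right_eq_Icc, Finset.sum_Ico_eq_sum_range]
    have hmi : m + 1 - i = (m - i) + 1 := by omega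
    rw [hmi]
    have e3 : ∀ t ∈ Finset.range ((m - i) + 1),
        ((m - i).choose (i + t - i) : ℝ) * p ^ (i + t) * (1 - p) ^ (m - (i + t))
        = p ^ i * (p ^ t * (1 - p) ^ ((m - i) - t) * ((m - i).choose t : ℝ)) := by
      intro t ht
      have h1 : i + t - i = t := by omega
      have h2 : m - (i + t) = (m - i) - t := by omega
      rw [h1, h2, pow_add]
      ring
    rw [Finset.sum_congr rfl e3, ← Finset.mul_sum, ← add_pow]
    norm_num
  rw [e2]
noncomputable def cc (δ : ℝ) : ℕ → ℝ
  | 0 => 0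
  | (k + 1) => rC (δ - 1) k

lemma prod_Icc_shift (δ : ℝ) : ∀ s : ℕ,
    (∏ j ∈ Finset.Icc 1 s, (δ - (j : ℝ))) = ∏ l ∈ Finset.range s, ((δ - 1) - (l : ℝ))
  | 0 => by simp
  | (s + 1) => by
    rw [Finset.prod_Icc_succ_top (by omega), Finset.prod_range_succ, prod_Icc_shift δ s]
    push_cast
    ring

lemma divPoly_eq (n : ℕ) (p δ : ℝ) :
    divPoly n p δ = ∑ k ∈ Finset.range (n + 1), (n.choose k : ℝ) * cc δ k * p ^ k := by
  unfold divPoly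
  have h1 : ∀ k ∈ Finset.Icc 1 n,
      (n.choose k : ℝ) * ((∏ j ∈ Finset.Icc 1 (k - 1), (δ - (j : ℝ)))
        / (Nat.factorial (k - 1) : ℝ)) * p ^ k
      = (n.choose k : ℝ) * cc δ k * p ^ k := by
    intro k hk
    simp only [Finset.mem_Icc] at hk
    obtain ⟨s, rfl⟩ : ∃ s, k = s + 1 := ⟨k - 1, by omega⟩
    simp only [Nat.add_sub_cancel, cc]
    rw [rC, prod_Icc_shift]
  rw [Finset.sum_congr rfl h1]
  apply Finset.sum_subset
  · intro k hk
    simp only [Finset.mem_Icc] at hk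
    simp only [Finset.mem_range]
    omega
  · intro k hk hnk
    simp only [Finset.mem_Icc] at hnk
    simp only [Finset.mem_range] at hk
    have : k = 0 := by omega
    subst this
    simp [cc]

noncomputable def gg1 (n : ℕ) (δ : ℝ) (p : ℝ) : ℝ :=
  ∑ k ∈ Finset.range (n + 1), (n.choose k : ℝ) * cc δ k * (k : ℝ) * p ^ (k - 1)

noncomputable def gg2 (n : ℕ) (δ : ℝ) (p : ℝ) : ℝ :=
  ∑ k ∈ Finset.range (n + 1),
    (n.choose k : ℝ) * cc δ k * (k : ℝ) * ((k - 1 : ℕ) : ℝ) * p ^ (k - 1 - 1)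

lemma hasDerivAt_divPoly (n : ℕ) (δ : ℝ) (p : ℝ) :
    HasDerivAt (fun q : ℝ => divPoly n q δ) (gg1 n δ p) p := by
  have hfun : (fun q : ℝ => divPoly n q δ)
      = fun q : ℝ => ∑ k ∈ Finset.range (n + 1), (n.choose k : ℝ) * cc δ k * q ^ k :=
    funext fun q => divPoly_eq n q δ
  rw [hfun]
  have hval : (∑ k ∈ Finset.range (n + 1),
      ((n.choose k : ℝ) * cc δ k) * ((k : ℝ) * p ^ (k - 1))) = gg1 n δ p := by
    unfold gg1
    exact Finset.sum_congr rfl fun k _ => by ring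
  rw [← hval]
  exact HasDerivAt.fun_sum fun k _ => (hasDerivAt_pow k p).const_mul ((n.choose k : ℝ) * cc δ k)

lemma hasDerivAt_gg1 (n : ℕ) (δ : ℝ) (p : ℝ) :
    HasDerivAt (gg1 n δ) (gg2 n δ p) p := by
  have hval : (∑ k ∈ Finset.range (n + 1),
      ((n.choose k : ℝ) * cc δ k * (k : ℝ)) * (((k - 1 : ℕ) : ℝ) * p ^ (k - 1 - 1)))
      = gg2 n δ p := by
    unfold gg2
    exact Finset.sum_congr rfl fun k _ => by ring
  rw [show gg1 n δ = fun q : ℝ => ∑ k ∈ Finset.range (n + 1),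
      (n.choose k : ℝ) * cc δ k * (k : ℝ) * q ^ (k - 1) from rfl, ← hval]
  exact HasDerivAt.fun_sum fun k _ =>
    (hasDerivAt_pow (k - 1) p).const_mul ((n.choose k : ℝ) * cc δ k * (k : ℝ))
lemma sum_range_succ2 (f : ℕ → ℝ) (m : ℕ) :
    ∑ k ∈ Finset.range (m + 2 + 1), f k
      = (∑ k ∈ Finset.range (m + 1), f (k + 2)) + f 1 + f 0 := by
  rw [Finset.sum_range_succ' f (m + 2)]
  rw [show m + 2 = m + 1 + 1 by omega]
  rw [Finset.sum_range_succ' (fun k => f (k + 1)) (m + 1)]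

lemma inner_vdm1 (j : ℕ) (δ : ℝ) :
    (∑ i ∈ Finset.range (j + 1), (j.choose i : ℝ) * rC (δ - 1) i)
      = rC (δ - 1 + (j : ℝ)) j := by
  rw [← rC_vandermonde j j (δ - 1)]
  refine Finset.sum_congr rfl fun i hi => ?_
  have hij : i ≤ j := by simpa [Nat.lt_succ_iff] using hi
  rw [Nat.choose_symm hij]

lemma inner_vdm2 (j : ℕ) (δ : ℝ) :
    (∑ i ∈ Finset.range (j + 1), (j.choose i : ℝ) * rC (δ - 1) (i + 1))
      = rC (δ - 1 + (j : ℝ)) (j + 1) := by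
  have h := rC_vandermonde j (j + 1) (δ - 1)
  rw [Finset.sum_range_succ' _ (j + 1)] at h
  simp only [Nat.succ_sub_succ, Nat.sub_zero, Nat.choose_succ_self, Nat.cast_zero, zero_mul,
    add_zero] at h
  rw [← h]
  refine Finset.sum_congr rfl fun i hi => ?_
  have hij : i ≤ j := by simpa [Nat.lt_succ_iff] using hi
  rw [Nat.choose_symm hij]

lemma gg1_eq (m : ℕ) (δ p : ℝ) :
    gg1 (m + 1) δ p = ((m : ℝ) + 1) * ∑ j ∈ Finset.range (m + 1),
      (m.choose j : ℝ) * rC (δ - 1 + (j : ℝ)) j * p ^ j * (1 - p) ^ (m - j) := by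
  unfold gg1
  rw [Finset.sum_range_succ']
  have h0 : ((m + 1).choose 0 : ℝ) * cc δ 0 * ((0 : ℕ) : ℝ) * p ^ (0 - 1) = 0 := by
    simp [cc]
  rw [h0, add_zero]
  have h1 : ∀ k ∈ Finset.range (m + 1),
      ((m + 1).choose (k + 1) : ℝ) * cc δ (k + 1) * ((k + 1 : ℕ) : ℝ) * p ^ (k + 1 - 1)
      = ((m : ℝ) + 1) * ((m.choose k : ℝ) * rC (δ - 1) k * p ^ k) := by
    intro k _
    have hc : ((m : ℝ) + 1) * (m.choose k : ℝ) = ((m + 1).choose (k + 1) : ℝ) * ((k : ℝ) + 1) := by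
      exact_mod_cast Nat.add_one_mul_choose_eq m k
    simp only [cc, Nat.add_sub_cancel]
    push_cast
    linear_combination (rC (δ - 1) k * p ^ k) * hc.symm
  rw [Finset.sum_congr rfl h1, ← Finset.mul_sum]
  have hb := bernstein_transform m (rC (δ - 1)) p
  rw [← hb]
  congr 1
  refine Finset.sum_congr rfl fun j _ => ?_
  rw [inner_vdm1]

lemma gg2_eq (m : ℕ) (δ p : ℝ) :
    gg2 (m + 2) δ p = ((m : ℝ) + 2) * ((m : ℝ) + 1) * ∑ j ∈ Finset.range (m + 1),
      (m.choose j : ℝ) * rC (δ - 1 + (j : ℝ)) (j + 1) * p ^ j * (1 - p) ^ (m - j) := by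
  unfold gg2
  rw [sum_range_succ2]
  have h0 : ((m + 2).choose 0 : ℝ) * cc δ 0 * ((0 : ℕ) : ℝ) * ((0 - 1 : ℕ) : ℝ)
      * p ^ (0 - 1 - 1) = 0 := by simp [cc]
  have h1 : ((m + 2).choose 1 : ℝ) * cc δ 1 * ((1 : ℕ) : ℝ) * ((1 - 1 : ℕ) : ℝ)
      * p ^ (1 - 1 - 1) = 0 := by norm_num
  rw [h0, h1, add_zero, add_zero]
  have h2 : ∀ k ∈ Finset.range (m + 1),
      ((m + 2).choose (k + 2) : ℝ) * cc δ (k + 2) * ((k + 2 : ℕ) : ℝ)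
        * ((k + 2 - 1 : ℕ) : ℝ) * p ^ (k + 2 - 1 - 1)
      = ((m : ℝ) + 2) * ((m : ℝ) + 1)
        * ((m.choose k : ℝ) * rC (δ - 1) (k + 1) * p ^ k) := by
    intro k _
    have hc1 : ((m : ℝ) + 2) * ((m + 1).choose (k + 1) : ℝ)
        = ((m + 2).choose (k + 2) : ℝ) * ((k : ℝ) + 2) := by
      exact_mod_cast Nat.add_one_mul_choose_eq (m + 1) (k + 1)
    have hc2 : ((m : ℝ) + 1) * (m.choose k : ℝ)
        = ((m + 1).choose (k + 1) : ℝ) * ((k : ℝ) + 1) := by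
      exact_mod_cast Nat.add_one_mul_choose_eq m k
    have hk1 : k + 2 - 1 = k + 1 := by omega
    rw [hk1]
    simp only [Nat.add_sub_cancel]
    simp only [cc]
    push_cast
    linear_combination (-((k : ℝ) + 1) * (rC (δ - 1) (k + 1) * p ^ k)) * hc1
      + (-((m : ℝ) + 2) * (rC (δ - 1) (k + 1) * p ^ k)) * hc2
  rw [Finset.sum_congr rfl h2, ← Finset.mul_sum]
  have hb := bernstein_transform m (fun i => rC (δ - 1) (i + 1)) p
  rw [← hb]
  congr 1
  refine Finset.sum_congr rfl fun j _ => ?_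
  rw [inner_vdm2]
lemma rC_shift_nonneg (δ : ℝ) (hδ : 0 ≤ δ) (j : ℕ) : 0 ≤ rC (δ - 1 + (j : ℝ)) j := by
  unfold rC
  apply div_nonneg _ (by positivity)
  apply Finset.prod_nonneg
  intro l hl
  simp only [Finset.mem_range] at hl
  have : (l : ℝ) + 1 ≤ (j : ℝ) := by exact_mod_cast Nat.succ_le_of_lt hl
  linarith

lemma rC_shift_succ_nonpos (δ : ℝ) (hδ0 : 0 ≤ δ) (hδ1 : δ ≤ 1) (j : ℕ) :
    rC (δ - 1 + (j : ℝ)) (j + 1) ≤ 0 := by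
  unfold rC
  apply div_nonpos_of_nonpos_of_nonneg _ (by positivity)
  rw [Finset.prod_range_succ]
  apply mul_nonpos_of_nonneg_of_nonpos
  · apply Finset.prod_nonneg
    intro l hl
    simp only [Finset.mem_range] at hl
    have : (l : ℝ) + 1 ≤ (j : ℝ) := by exact_mod_cast Nat.succ_le_of_lt hl
    linarith
  · linarith

lemma gg1_nonneg (n : ℕ) (hn : 1 ≤ n) (δ : ℝ) (hδ : 0 ≤ δ) (p : ℝ)
    (hp0 : 0 ≤ p) (hp1 : p ≤ 1) : 0 ≤ gg1 n δ p := by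
  obtain ⟨m, rfl⟩ : ∃ m, n = m + 1 := ⟨n - 1, by omega⟩
  rw [gg1_eq]
  apply mul_nonneg (by positivity)
  apply Finset.sum_nonneg
  intro j _
  have h1 : (0 : ℝ) ≤ (m.choose j : ℝ) := Nat.cast_nonneg _
  have h2 := rC_shift_nonneg δ hδ j
  have h3 : (0 : ℝ) ≤ p ^ j := pow_nonneg hp0 _
  have h4 : (0 : ℝ) ≤ (1 - p) ^ (m - j) := pow_nonneg (by linarith) _
  exact mul_nonneg (mul_nonneg (mul_nonneg h1 h2) h3) h4

lemma gg2_nonpos (n : ℕ) (hn : 1 ≤ n) (δ : ℝ) (hδ0 : 0 ≤ δ) (hδ1 : δ ≤ 1) (p : ℝ)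
    (hp0 : 0 ≤ p) (hp1 : p ≤ 1) : gg2 n δ p ≤ 0 := by
  rcases Nat.lt_or_ge n 2 with h2 | h2
  · have : n = 1 := by omega
    subst this
    unfold gg2
    simp [Finset.sum_range_succ, cc]
  · obtain ⟨m, rfl⟩ : ∃ m, n = m + 2 := ⟨n - 2, by omega⟩
    rw [gg2_eq]
    apply mul_nonpos_of_nonneg_of_nonpos (by positivity)
    apply Finset.sum_nonpos
    intro j _
    have h1 : (0 : ℝ) ≤ (m.choose j : ℝ) := Nat.cast_nonneg _
    have h2 := rC_shift_succ_nonpos δ hδ0 hδ1 j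
    have h3 : (0 : ℝ) ≤ p ^ j := pow_nonneg hp0 _
    have h4 : (0 : ℝ) ≤ (1 - p) ^ (m - j) := pow_nonneg (by linarith) _
    exact mul_nonpos_of_nonpos_of_nonneg
      (mul_nonpos_of_nonpos_of_nonneg (mul_nonpos_of_nonneg_of_nonpos h1 h2) h3) h4

lemma divPoly_p_mono (n : ℕ) (hn : 1 ≤ n) (δ : ℝ) (hδ0 : 0 ≤ δ) (hδ1 : δ ≤ 1) :
    MonotoneOn (fun p : ℝ => divPoly n p δ) (Icc 0 1) := by
  apply monotoneOn_of_deriv_nonneg (convex_Icc 0 1)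
  · exact fun p _ => (hasDerivAt_divPoly n δ p).continuousAt.continuousWithinAt
  · exact fun p _ => (hasDerivAt_divPoly n δ p).differentiableAt.differentiableWithinAt
  · intro p hp
    rw [interior_Icc] at hp
    rw [(hasDerivAt_divPoly n δ p).deriv]
    exact gg1_nonneg n hn δ hδ0 p hp.1.le hp.2.le

lemma divPoly_p_concave (n : ℕ) (hn : 1 ≤ n) (δ : ℝ) (hδ0 : 0 ≤ δ) (hδ1 : δ ≤ 1) :
    ConcaveOn ℝ (Icc 0 1) (fun p : ℝ => divPoly n p δ) := by
  have hderiv : deriv (fun p : ℝ => divPoly n p δ) = gg1 n δ :=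
    funext fun p => (hasDerivAt_divPoly n δ p).deriv
  apply concaveOn_of_deriv2_nonpos (convex_Icc 0 1)
  · exact fun p _ => (hasDerivAt_divPoly n δ p).continuousAt.continuousWithinAt
  · exact fun p _ => (hasDerivAt_divPoly n δ p).differentiableAt.differentiableWithinAt
  · rw [hderiv]
    exact fun p _ => (hasDerivAt_gg1 n δ p).differentiableAt.differentiableWithinAt
  · intro p hp
    rw [interior_Icc] at hp
    have : deriv^[2] (fun p : ℝ => divPoly n p δ) p = gg2 n δ p := by
      simp only [Function.iterate_succ, Function.iterate_zero, Function.comp_apply, Function.id_def]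
      rw [hderiv]
      exact (hasDerivAt_gg1 n δ p).deriv
    rw [this]
    exact gg2_nonpos n hn δ hδ0 hδ1 p hp.1.le hp.2.le
noncomputable def ee (δ : ℝ) : ℕ → ℝ
  | 0 => 0
  | (s + 1) => rC (δ + (s : ℝ)) s

lemma divPoly_master (n : ℕ) (p δ : ℝ) :
    divPoly n p δ
      = ∑ j ∈ Finset.range (n + 1), (n.choose j : ℝ) * ee δ j * p ^ j * (1 - p) ^ (n - j) := by
  rw [divPoly_eq, ← bernstein_transform n (cc δ) p]
  refine Finset.sum_congr rfl fun j _ => ?_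
  have hinner : (∑ i ∈ Finset.range (j + 1), (j.choose i : ℝ) * cc δ i) = ee δ j := by
    cases j with
    | zero => simp [cc, ee]
    | succ s =>
      rw [Finset.sum_range_succ' _ (s + 1)]
      have h0 : ((s + 1).choose 0 : ℝ) * cc δ 0 = 0 := by simp [cc]
      rw [h0, add_zero]
      have h := rC_vandermonde (s + 1) s (δ - 1)
      have hx : δ - 1 + ((s + 1 : ℕ) : ℝ) = δ + (s : ℝ) := by push_cast; ring
      rw [hx] at h
      show (∑ t ∈ Finset.range (s + 1), ((s + 1).choose (t + 1) : ℝ) * cc δ (t + 1)) = ee δ (s + 1)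
      rw [show ee δ (s + 1) = rC (δ + (s : ℝ)) s from rfl, ← h]
      refine Finset.sum_congr rfl fun t ht => ?_
      have hts : t ≤ s := by simpa [Nat.lt_succ_iff] using ht
      have : (s + 1).choose (t + 1) = (s + 1).choose (s - t) := by
        rw [← Nat.choose_symm (by omega : t + 1 ≤ s + 1)]
        congr 1
        omega
      rw [this]
      rfl
  rw [hinner]

lemma prod_cast_factorial : ∀ s : ℕ, (∏ l ∈ Finset.range s, ((s : ℝ) - (l : ℝ)))
    = (Nat.factorial s : ℝ)
  | 0 => by simp
  | (s + 1) => by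
    rw [Finset.prod_range_succ']
    have h1 : ∀ l ∈ Finset.range s, (((s + 1 : ℕ) : ℝ) - ((l + 1 : ℕ) : ℝ)) = (s : ℝ) - (l : ℝ) := by
      intro l _
      push_cast
      ring
    rw [Finset.prod_congr rfl h1, prod_cast_factorial s, Nat.factorial_succ]
    push_cast
    ring

lemma ee_zero_val (s : ℕ) : ee 0 (s + 1) = 1 := by
  show rC (0 + (s : ℝ)) s = 1
  rw [zero_add, rC, prod_cast_factorial]
  have : (Nat.factorial s : ℝ) ≠ 0 := by exact_mod_cast Nat.factorial_ne_zero s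
  field_simp

lemma divPoly_zero (n : ℕ) (p : ℝ) : divPoly n p 0 = 1 - (1 - p) ^ n := by
  rw [divPoly_master, Finset.sum_range_succ']
  have h0 : (n.choose 0 : ℝ) * ee 0 0 * p ^ 0 * (1 - p) ^ (n - 0) = 0 := by
    show (n.choose 0 : ℝ) * (0 : ℝ) * p ^ 0 * (1 - p) ^ (n - 0) = 0
    ring
  rw [h0, add_zero]
  have hb2 : (1 : ℝ) - (1 - p) ^ n
      = ∑ k ∈ Finset.range n, p ^ (k + 1) * (1 - p) ^ (n - (k + 1)) * (n.choose (k + 1) : ℝ) := by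
    have h := add_pow p (1 - p) n
    rw [show p + (1 - p) = 1 by ring, one_pow, Finset.sum_range_succ' _ n] at h
    simp only [pow_zero, Nat.sub_zero, Nat.choose_zero_right, Nat.cast_one, one_mul, mul_one] at h
    linarith
  rw [hb2]
  refine Finset.sum_congr rfl fun k _ => ?_
  rw [ee_zero_val]
  ring

lemma divPoly_one (n : ℕ) (hn : 1 ≤ n) (p : ℝ) : divPoly n p 1 = (n : ℝ) * p := by
  unfold divPoly
  rw [Finset.sum_eq_single 1]
  · simp
  · intro k hk hne
    simp only [Finset.mem_Icc] at hk
    have h2 : 2 ≤ k := by omega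
    have hz : (∏ j ∈ Finset.Icc 1 (k - 1), ((1 : ℝ) - (j : ℝ))) = 0 := by
      apply Finset.prod_eq_zero (i := 1)
      · simp only [Finset.mem_Icc]
        omega
      · norm_num
    rw [hz]
    simp
  · intro h
    exact absurd (by simp only [Finset.mem_Icc]; omega : (1 : ℕ) ∈ Finset.Icc 1 n) h
lemma prod_shift (x : ℝ) : ∀ s : ℕ,
    (∏ l ∈ Finset.range s, (x + (s : ℝ) - (l : ℝ))) = ∏ t ∈ Finset.range s, (x + (t : ℝ) + 1)
  | 0 => by simp
  | (s + 1) => by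
    rw [Finset.prod_range_succ', Finset.prod_range_succ]
    have h1 : ∀ l ∈ Finset.range s,
        (x + ((s + 1 : ℕ) : ℝ) - ((l + 1 : ℕ) : ℝ)) = x + (s : ℝ) - (l : ℝ) := by
      intro l _
      push_cast
      ring
    rw [Finset.prod_congr rfl h1, prod_shift x s]
    push_cast
    ring

lemma affine_convex (c : ℝ) : ConvexOn ℝ (Icc (0 : ℝ) 1) (fun δ : ℝ => δ + c) := by
  refine ⟨convex_Icc 0 1, fun x _ y _ a b ha hb hab => ?_⟩
  simp only [smul_eq_mul]
  exact le_of_eq (by linear_combination (-c : ℝ) * hab)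

lemma Q_props (s : ℕ) :
    ConvexOn ℝ (Icc (0 : ℝ) 1) (fun δ : ℝ => ∏ t ∈ Finset.range s, (δ + (t : ℝ) + 1)) ∧
    MonotoneOn (fun δ : ℝ => ∏ t ∈ Finset.range s, (δ + (t : ℝ) + 1)) (Icc (0 : ℝ) 1) ∧
    ∀ δ ∈ Icc (0 : ℝ) 1, 0 ≤ ∏ t ∈ Finset.range s, (δ + (t : ℝ) + 1) := by
  induction s with
  | zero =>
    simp only [Finset.range_zero, Finset.prod_empty]
    exact ⟨convexOn_const 1 (convex_Icc 0 1), monotoneOn_const, fun δ _ => zero_le_one⟩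
  | succ s ih =>
    obtain ⟨hconv, hmono, hpos⟩ := ih
    have haffm : MonotoneOn (fun δ : ℝ => δ + ((s : ℝ) + 1)) (Icc (0 : ℝ) 1) :=
      fun a _ b _ hab => by simpa using hab
    have haffp : ∀ δ ∈ Icc (0 : ℝ) 1, (0 : ℝ) ≤ δ + ((s : ℝ) + 1) := by
      intro δ hδ
      have : (0 : ℝ) ≤ δ := hδ.1
      positivity
    have heq : (fun δ : ℝ => ∏ t ∈ Finset.range (s + 1), (δ + (t : ℝ) + 1))
        = fun δ : ℝ => (∏ t ∈ Finset.range s, (δ + (t : ℝ) + 1)) * (δ + ((s : ℝ) + 1)) := by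
      funext δ
      rw [Finset.prod_range_succ]
      ring
    refine ⟨?_, ?_, ?_⟩
    · rw [heq]
      exact hconv.mul (affine_convex ((s : ℝ) + 1)) hpos haffp (hmono.monovaryOn haffm)
    · rw [heq]
      intro a ha b hb hab
      exact mul_le_mul (hmono ha hb hab) (haffm ha hb hab) (haffp a ha) (hpos b hb)
    · intro δ hδ
      rw [show (∏ t ∈ Finset.range (s + 1), (δ + (t : ℝ) + 1))
        = (∏ t ∈ Finset.range s, (δ + (t : ℝ) + 1)) * (δ + ((s : ℝ) + 1)) by
          rw [Finset.prod_range_succ]; ring]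
      exact mul_nonneg (hpos δ hδ) (haffp δ hδ)

lemma ee_fun_eq (s : ℕ) : (fun δ : ℝ => ee δ (s + 1))
    = fun δ : ℝ => ((Nat.factorial s : ℝ))⁻¹ * ∏ t ∈ Finset.range s, (δ + (t : ℝ) + 1) := by
  funext δ
  show rC (δ + (s : ℝ)) s = _
  rw [rC, ← prod_shift δ s, div_eq_inv_mul]

lemma ee_convexOn (j : ℕ) : ConvexOn ℝ (Icc (0 : ℝ) 1) (fun δ : ℝ => ee δ j) := by
  cases j with
  | zero => exact convexOn_const 0 (convex_Icc 0 1)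
  | succ s =>
    rw [ee_fun_eq]
    have h := ((Q_props s).1).smul (c := ((Nat.factorial s : ℝ))⁻¹) (by positivity)
    simpa [smul_eq_mul] using h

lemma ee_monotone (j : ℕ) : MonotoneOn (fun δ : ℝ => ee δ j) (Icc (0 : ℝ) 1) := by
  cases j with
  | zero => exact monotoneOn_const
  | succ s =>
    rw [ee_fun_eq]
    intro a ha b hb hab
    have := (Q_props s).2.1 ha hb hab
    have h0 : (0 : ℝ) ≤ ((Nat.factorial s : ℝ))⁻¹ := by positivity
    exact mul_le_mul_of_nonneg_left this h0

lemma convexOn_finset_sum {ι : Type*} (t : Finset ι) (f : ι → ℝ → ℝ)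
    (h : ∀ i ∈ t, ConvexOn ℝ (Icc (0 : ℝ) 1) (f i)) :
    ConvexOn ℝ (Icc (0 : ℝ) 1) (fun x => ∑ i ∈ t, f i x) := by
  classical
  induction t using Finset.induction with
  | empty => simpa using convexOn_const 0 (convex_Icc (0 : ℝ) 1)
  | insert a s hx ih =>
    have := (h a (Finset.mem_insert_self a s)).add (ih fun i hi => h i (Finset.mem_insert_of_mem hi))
    simp only [Finset.sum_insert hx]
    exact this

lemma divPoly_delta_mono (n : ℕ) (p : ℝ) (hp0 : 0 ≤ p) (hp1 : p ≤ 1) :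
    MonotoneOn (fun δ : ℝ => divPoly n p δ) (Icc 0 1) := by
  intro a ha b hb hab
  simp only
  rw [divPoly_master n p a, divPoly_master n p b]
  apply Finset.sum_le_sum
  intro j _
  have h1 : ee a j ≤ ee b j := ee_monotone j ha hb hab
  apply mul_le_mul_of_nonneg_right _ (pow_nonneg (by linarith : (0:ℝ) ≤ 1 - p) _)
  apply mul_le_mul_of_nonneg_right _ (pow_nonneg hp0 _)
  exact mul_le_mul_of_nonneg_left h1 (Nat.cast_nonneg _)

lemma divPoly_delta_convex (n : ℕ) (p : ℝ) (hp0 : 0 ≤ p) (hp1 : p ≤ 1) :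
    ConvexOn ℝ (Icc 0 1) (fun δ : ℝ => divPoly n p δ) := by
  have heq : (fun δ : ℝ => divPoly n p δ)
      = fun δ : ℝ => ∑ j ∈ Finset.range (n + 1),
          ((n.choose j : ℝ) * p ^ j * (1 - p) ^ (n - j)) * ee δ j := by
    funext δ
    rw [divPoly_master]
    exact Finset.sum_congr rfl fun j _ => by ring
  rw [heq]
  apply convexOn_finset_sum
  intro j _
  have hc : (0 : ℝ) ≤ (n.choose j : ℝ) * p ^ j * (1 - p) ^ (n - j) := by
    have : (0:ℝ) ≤ 1 - p := by linarith
    positivity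
  have h := (ee_convexOn j).smul hc
  simpa [smul_eq_mul] using h

theorem stmt19 (n : ℕ) (hn : 1 ≤ n) :
    (∀ δ : ℝ, 0 ≤ δ → δ ≤ 1 →
      MonotoneOn (fun p : ℝ => divPoly n p δ) (Icc 0 1) ∧
      ConcaveOn ℝ (Icc 0 1) (fun p : ℝ => divPoly n p δ)) ∧
    (∀ p : ℝ, 0 ≤ p → p ≤ 1 →
      MonotoneOn (fun δ : ℝ => divPoly n p δ) (Icc 0 1) ∧
      ConvexOn ℝ (Icc 0 1) (fun δ : ℝ => divPoly n p δ) ∧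
      divPoly n p 0 = 1 - (1 - p) ^ n ∧ divPoly n p 1 = n * p) := by
  constructor
  · intro δ hδ0 hδ1
    exact ⟨divPoly_p_mono n hn δ hδ0 hδ1, divPoly_p_concave n hn δ hδ0 hδ1⟩
  · intro p hp0 hp1
    exact ⟨divPoly_delta_mono n p hp0 hp1, divPoly_delta_convex n p hp0 hp1,
      divPoly_zero n p, divPoly_one n hn p⟩
end
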